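/- arXiv:1812.11701 — 3 statements merged into one kernel-verified Lean document; each statement's English description precedes it below -/
import Mathlib

section
/- Let n ≥ 2 and j₀ ∈ {1, …, n}. Let p_{j₀} = ∞ and let p_j ∈ [1, ∞] for j ≠ j₀, j ∈ {0, 1, …, n}, satisfy ∑_{j=0}^{n} 1/p_j = 1. Then there is no finite constant c such that |Λ^{(n)}(F₀, …, F_n)| ≤ c ∏_{j=0}^{n} ‖F_j‖_{p_j} holds for all tuples of measurable functions F₀, …, F_n on ℝⁿ for which Λ^{(n)} is defined. That is, the estimate (Lp bound) fails whenever one of the exponents p₁, …, p_n equals ∞. -/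
open MeasureTheory

/-- Truncated (at scale `ε`) version of the averaged simplex Hilbert transform form
`Λ^{(n)}(F₀,…,F_n)` in dimension `n = d + 2` (so that `n ≥ 2` automatically):
`∫_{ℝⁿ} ∫_{|t|>ε} ∫_{[0,1]^{n-1}} F₀(x) (∏_{j=1}^{n-1} F_j(x+tα_j e_j)) F_n(x+te_n) dα dt/t dx`,
where `e₁,…,e_n` are the standard unit vectors of `ℝⁿ` (the functions are indexed by `ℕ`;
only the indices `0,…,n` are used). -/
noncomputable def simplexTrunc (d : ℕ) (F : ℕ → (Fin (d + 2) → ℝ) → ℂ) (ε : ℝ) : ℂ :=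
  ∫ x : Fin (d + 2) → ℝ,
    ∫ t in {t : ℝ | ε < |t|},
      (∫ α in (Set.univ.pi fun _ : Fin (d + 1) => Set.Icc (0:ℝ) 1),
        F 0 x *
          (∏ j : Fin (d + 1), F (j.1 + 1) (x + Pi.single j.castSucc (t * α j))) *
          F (d + 2) (x + Pi.single (Fin.last (d + 1)) t)) / (t : ℂ)

/-- `Λ^{(n)}(F₀,…,F_n) = L` in the principal value sense, for `n = d + 2`. -/
def HasSimplexForm (d : ℕ) (F : ℕ → (Fin (d + 2) → ℝ) → ℂ) (L : ℂ) : Prop :=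
  Filter.Tendsto (simplexTrunc d F) (nhdsWithin 0 (Set.Ioi 0)) (nhds L)

namespace EPC

open Set

noncomputable section

variable (d j₀ : ℕ) (a : ℝ)

/-- the distinguished coordinate (`j₀ - 1`). -/
def k0 : Fin (d + 2) := ⟨(j₀ - 1) % (d + 2), Nat.mod_lt _ (Nat.succ_pos _)⟩

lemma k0_val (hj2 : j₀ ≤ d + 2) : (k0 d j₀ : ℕ) = j₀ - 1 := Nat.mod_eq_of_lt (by omega)

/-- thin box -/
def BB : Set (Fin (d + 2) → ℝ) :=
  Set.univ.pi fun i => if i = k0 d j₀ then Icc (0:ℝ) a else Icc (0:ℝ) 2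

/-- slab for the `L^∞` function -/
def SL : Set (Fin (d + 2) → ℝ) := {y | y (k0 d j₀) ∈ Icc (2 * a) 2}

def SS (j : ℕ) : Set (Fin (d + 2) → ℝ) := if j = j₀ then SL d j₀ a else BB d j₀ a

def fre (j : ℕ) : (Fin (d + 2) → ℝ) → ℝ := (SS d j₀ a j).indicator fun _ => 1

def FF (j : ℕ) (y : Fin (d + 2) → ℝ) : ℂ := ((fre d j₀ a j y : ℝ) : ℂ)

def AA : Set (Fin (d + 1) → ℝ) := Set.univ.pi fun _ => Icc (0:ℝ) 1

def gre (x : Fin (d + 2) → ℝ) (t : ℝ) (α : Fin (d + 1) → ℝ) : ℝ :=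
  fre d j₀ a 0 x *
    (∏ j : Fin (d + 1), fre d j₀ a (j.1 + 1) (x + Pi.single j.castSucc (t * α j))) *
    fre d j₀ a (d + 2) (x + Pi.single (Fin.last (d + 1)) t)

def HH (x : Fin (d + 2) → ℝ) (t : ℝ) : ℝ := (∫ α in AA d, gre d j₀ a x t α) / t

def GG (ε : ℝ) (x : Fin (d + 2) → ℝ) : ℝ := ∫ t in {t : ℝ | ε < |t|}, HH d j₀ a x t

def Tre (ε : ℝ) : ℝ := ∫ x, GG d j₀ a ε x

/-! ### Measurability -/

lemma measurableSet_BB : MeasurableSet (BB d j₀ a) :=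
  MeasurableSet.univ_pi fun _ => by split <;> exact measurableSet_Icc

lemma measurableSet_SL : MeasurableSet (SL d j₀ a) :=
  (measurable_pi_apply _) measurableSet_Icc

lemma measurableSet_SS (j : ℕ) : MeasurableSet (SS d j₀ a j) := by
  unfold SS; split
  · exact measurableSet_SL d j₀ a
  · exact measurableSet_BB d j₀ a

lemma measurableSet_AA : MeasurableSet (AA d) :=
  MeasurableSet.univ_pi fun _ => measurableSet_Icc

lemma measurable_fre (j : ℕ) : Measurable (fre d j₀ a j) :=
  measurable_const.indicator (measurableSet_SS d j₀ a j)

lemma fre_nonneg (j : ℕ) (y : Fin (d + 2) → ℝ) : 0 ≤ fre d j₀ a j y :=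
  Set.indicator_nonneg (fun _ _ => zero_le_one) y

lemma fre_le_one (j : ℕ) (y : Fin (d + 2) → ℝ) : fre d j₀ a j y ≤ 1 := by
  classical
  unfold fre; rw [Set.indicator_apply]; split <;> norm_num

lemma measurable_gre :
    Measurable (fun q : ((Fin (d + 2) → ℝ) × ℝ) × (Fin (d + 1) → ℝ) =>
      gre d j₀ a q.1.1 q.1.2 q.2) := by
  unfold gre
  apply Measurable.mul
  apply Measurable.mul
  · exact (measurable_fre d j₀ a 0).comp (measurable_fst.comp measurable_fst)
  · apply Finset.measurable_prod
    intro j _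
    apply (measurable_fre d j₀ a (j.1 + 1)).comp
    apply measurable_pi_lambda
    intro i
    simp only [Pi.add_apply, Pi.single_apply]
    apply Measurable.add
    · exact (measurable_pi_apply i).comp (measurable_fst.comp measurable_fst)
    · split
      · exact ((measurable_snd.comp measurable_fst).mul ((measurable_pi_apply j).comp measurable_snd))
      · exact measurable_const
  · apply (measurable_fre d j₀ a (d + 2)).comp
    apply measurable_pi_lambda
    intro i
    simp only [Pi.add_apply, Pi.single_apply]
    apply Measurable.add
    · exact (measurable_pi_apply i).comp (measurable_fst.comp measurable_fst)
    · split
      · exact measurable_snd.comp measurable_fst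
      · exact measurable_const

lemma measurable_gre_alpha (x : Fin (d + 2) → ℝ) (t : ℝ) :
    Measurable (fun α => gre d j₀ a x t α) :=
  (measurable_gre d j₀ a).comp (measurable_prodMk_left (x := (x, t)))

lemma gre_nonneg (x : Fin (d + 2) → ℝ) (t : ℝ) (α : Fin (d + 1) → ℝ) :
    0 ≤ gre d j₀ a x t α :=
  mul_nonneg (mul_nonneg (fre_nonneg _ _ _ _ _)
    (Finset.prod_nonneg fun _ _ => fre_nonneg _ _ _ _ _)) (fre_nonneg _ _ _ _ _)

lemma gre_le_one (x : Fin (d + 2) → ℝ) (t : ℝ) (α : Fin (d + 1) → ℝ) :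
    gre d j₀ a x t α ≤ 1 := by
  unfold gre
  apply mul_le_one₀ _ (fre_nonneg _ _ _ _ _) (fre_le_one _ _ _ _ _)
  apply mul_le_one₀ (fre_le_one _ _ _ _ _)
  · exact Finset.prod_nonneg fun _ _ => fre_nonneg _ _ _ _ _
  · exact Finset.prod_le_one (fun _ _ => fre_nonneg _ _ _ _ _) (fun _ _ => fre_le_one _ _ _ _ _)

/-! ### membership basics -/

lemma mem_BB_iff {x : Fin (d + 2) → ℝ} :
    x ∈ BB d j₀ a ↔ ∀ i, x i ∈ (if i = k0 d j₀ then Icc (0:ℝ) a else Icc (0:ℝ) 2) := by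
  unfold BB; rw [Set.mem_univ_pi]

lemma mem_BB_k0 {x : Fin (d + 2) → ℝ} (hx : x ∈ BB d j₀ a) : x (k0 d j₀) ∈ Icc (0:ℝ) a := by
  have := (mem_BB_iff d j₀ a).1 hx (k0 d j₀); simpa using this

lemma mem_AA_iff {α : Fin (d + 1) → ℝ} :
    α ∈ AA d ↔ ∀ j, α j ∈ Icc (0:ℝ) 1 := by
  unfold AA; rw [Set.mem_univ_pi]

lemma k0_eq_last (hje : j₀ = d + 2) : k0 d j₀ = Fin.last (d + 1) := by
  apply Fin.ext
  rw [k0_val d j₀ (by omega)]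
  simp [hje, Fin.last]

/-! ### vanishing lemmas -/

lemma gre_zero_notBB (hj1 : 1 ≤ j₀) {x : Fin (d + 2) → ℝ} (hx : x ∉ BB d j₀ a)
    (t : ℝ) (α : Fin (d + 1) → ℝ) : gre d j₀ a x t α = 0 := by
  unfold gre
  have h0 : fre d j₀ a 0 x = 0 := by
    unfold fre SS
    rw [if_neg (by omega : ¬ 0 = j₀)]
    exact Set.indicator_of_notMem hx _
  rw [h0, zero_mul, zero_mul]

lemma factor_zero_B {x : Fin (d + 2) → ℝ} {t : ℝ} (α : Fin (d + 1) → ℝ) (hje : j₀ = d + 2)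
    (h : x (k0 d j₀) + t ∉ Icc (2 * a) 2) : gre d j₀ a x t α = 0 := by
  have hk : k0 d j₀ = Fin.last (d + 1) := k0_eq_last d j₀ hje
  unfold gre
  have hz : fre d j₀ a (d + 2) (x + Pi.single (Fin.last (d + 1)) t) = 0 := by
    unfold fre SS
    rw [if_pos hje.symm]
    apply Set.indicator_of_notMem
    unfold SL
    rw [Set.mem_setOf_eq, hk]
    simpa [Pi.single_eq_same, hk] using h
  rw [hz, mul_zero]

lemma factor_zero_A {x : Fin (d + 2) → ℝ} {t : ℝ} {α : Fin (d + 1) → ℝ}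
    (hj1 : 1 ≤ j₀) (hjlt : j₀ < d + 2)
    (h : x (k0 d j₀) + t * α ⟨j₀ - 1, by omega⟩ ∉ Icc (2 * a) 2) :
    gre d j₀ a x t α = 0 := by
  set j' : Fin (d + 1) := ⟨j₀ - 1, by omega⟩ with hj'
  have hcast : j'.castSucc = k0 d j₀ := by
    apply Fin.ext
    rw [k0_val d j₀ (by omega)]
    simp [hj']
  unfold gre
  have hz : fre d j₀ a (j'.1 + 1) (x + Pi.single j'.castSucc (t * α j')) = 0 := by
    have hidx : j'.1 + 1 = j₀ := by simp [hj']; omega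
    rw [hidx]
    unfold fre SS
    rw [if_pos rfl]
    apply Set.indicator_of_notMem
    unfold SL
    rw [Set.mem_setOf_eq, ← hcast]
    rw [← hcast] at h
    simpa [Pi.single_eq_same] using h
  rw [Finset.prod_eq_zero (Finset.mem_univ j') hz, mul_zero, zero_mul]

lemma gre_zero_nonpos (hj1 : 1 ≤ j₀) (hj2 : j₀ ≤ d + 2) (ha : 0 < a)
    {x : Fin (d + 2) → ℝ} {t : ℝ} {α : Fin (d + 1) → ℝ} (ht : t ≤ 0) (hα : α ∈ AA d) :
    gre d j₀ a x t α = 0 := by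
  by_cases hx : x ∈ BB d j₀ a
  swap
  · exact gre_zero_notBB d j₀ a hj1 hx t α
  have hxk := mem_BB_k0 d j₀ a hx
  rcases lt_or_eq_of_le hj2 with hlt | heq
  · apply factor_zero_A d j₀ a hj1 hlt
    have hαj := (mem_AA_iff d).1 hα ⟨j₀ - 1, by omega⟩
    intro hm
    have : t * α ⟨j₀ - 1, by omega⟩ ≤ 0 := mul_nonpos_of_nonpos_of_nonneg ht hαj.1
    have := hm.1
    simp only [mem_Icc] at hxk
    linarith
  · apply factor_zero_B d j₀ a α heq
    intro hm
    have := hm.1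
    simp only [mem_Icc] at hxk
    linarith

lemma gre_zero_small (hj1 : 1 ≤ j₀) (hj2 : j₀ ≤ d + 2) (ha : 0 < a)
    {x : Fin (d + 2) → ℝ} {t : ℝ} {α : Fin (d + 1) → ℝ} (ht : |t| < a) (hα : α ∈ AA d) :
    gre d j₀ a x t α = 0 := by
  by_cases hx : x ∈ BB d j₀ a
  swap
  · exact gre_zero_notBB d j₀ a hj1 hx t α
  have hxk := mem_BB_k0 d j₀ a hx
  simp only [mem_Icc] at hxk
  rcases lt_or_eq_of_le hj2 with hlt | heq
  · apply factor_zero_A d j₀ a hj1 hlt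
    have hαj := (mem_AA_iff d).1 hα ⟨j₀ - 1, by omega⟩
    simp only [mem_Icc] at hαj
    intro hm
    have h1 : t * α ⟨j₀ - 1, by omega⟩ ≤ |t| := by
      calc t * α ⟨j₀ - 1, by omega⟩ ≤ |t * α ⟨j₀ - 1, by omega⟩| := le_abs_self _
      _ = |t| * |α ⟨j₀ - 1, by omega⟩| := abs_mul _ _
      _ ≤ |t| * 1 := by
          apply mul_le_mul_of_nonneg_left _ (abs_nonneg t)
          rw [abs_le]; constructor <;> linarith [hαj.1, hαj.2]
      _ = |t| := mul_one _
    have := hm.1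
    linarith
  · apply factor_zero_B d j₀ a α heq
    intro hm
    have h1 : t ≤ |t| := le_abs_self t
    have := hm.1
    linarith

lemma factor_zero_C {x : Fin (d + 2) → ℝ} {t : ℝ} (α : Fin (d + 1) → ℝ) (hjlt : j₀ < d + 2)
    (h : x (Fin.last (d + 1)) + t ∉ Icc (0:ℝ) 2) : gre d j₀ a x t α = 0 := by
  unfold gre
  have hz : fre d j₀ a (d + 2) (x + Pi.single (Fin.last (d + 1)) t) = 0 := by
    unfold fre SS
    rw [if_neg (by omega : ¬ d + 2 = j₀)]
    apply Set.indicator_of_notMem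
    rw [mem_BB_iff]
    push_neg
    refine ⟨Fin.last (d + 1), ?_⟩
    have hne : ¬ (Fin.last (d + 1) = k0 d j₀) := by
      intro hcon
      have := congrArg Fin.val hcon
      rw [k0_val d j₀ (by omega)] at this
      simp [Fin.last] at this
      omega
    rw [if_neg hne]
    simpa [Pi.single_eq_same] using h
  rw [hz, mul_zero]

lemma gre_zero_big (hj1 : 1 ≤ j₀) (hj2 : j₀ ≤ d + 2) (ha : 0 < a)
    {x : Fin (d + 2) → ℝ} {t : ℝ} {α : Fin (d + 1) → ℝ} (ht : 2 < |t|) (hα : α ∈ AA d) :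
    gre d j₀ a x t α = 0 := by
  rcases le_or_gt t 0 with h0 | h0
  · exact gre_zero_nonpos d j₀ a hj1 hj2 ha h0 hα
  have ht2 : 2 < t := by rwa [abs_of_pos h0] at ht
  by_cases hx : x ∈ BB d j₀ a
  swap
  · exact gre_zero_notBB d j₀ a hj1 hx t α
  rcases lt_or_eq_of_le hj2 with hlt | heq
  · apply factor_zero_C d j₀ a α hlt
    have hxl : x (Fin.last (d + 1)) ∈ Icc (0:ℝ) 2 := by
      have h := (mem_BB_iff d j₀ a).1 hx (Fin.last (d + 1))
      have hne : ¬ (Fin.last (d + 1) = k0 d j₀) := by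
        intro hcon
        have := congrArg Fin.val hcon
        rw [k0_val d j₀ (by omega)] at this
        simp [Fin.last] at this
        omega
      rwa [if_neg hne] at h
    simp only [mem_Icc] at hxl ⊢
    push_neg
    intro _
    linarith
  · apply factor_zero_B d j₀ a α heq
    have hxk := mem_BB_k0 d j₀ a hx
    simp only [mem_Icc] at hxk ⊢
    push_neg
    intro _
    linarith

/-! ### integrability and basic integral bounds -/

lemma integrableOn_of_bound {γ : Type*} [MeasurableSpace γ] {μ : Measure γ} {s : Set γ}
    (hs : MeasurableSet s) (hμ : μ s < ⊤) {f : γ → ℝ} (hf : Measurable f) (C : ℝ)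
    (hb : ∀ y ∈ s, |f y| ≤ C) : IntegrableOn f s μ := by
  refine Integrable.mono' (g := fun _ => C) (integrableOn_const hμ.ne)
    hf.aestronglyMeasurable ?_
  rw [ae_restrict_iff' hs]
  exact MeasureTheory.ae_of_all _ (fun y hy => by
    rw [Real.norm_eq_abs]; exact hb y hy)

lemma volume_AA_lt_top : volume (AA d) < ⊤ :=
  (isCompact_univ_pi fun _ => isCompact_Icc).measure_lt_top

lemma volume_AA : volume (AA d) = 1 := by
  unfold AA
  rw [volume_pi_pi]
  simp [Real.volume_Icc]

lemma volume_BB_lt_top : volume (BB d j₀ a) < ⊤ := by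
  unfold BB
  apply IsCompact.measure_lt_top
  apply isCompact_univ_pi
  intro i
  split <;> exact isCompact_Icc

lemma gre_abs_le_one (x : Fin (d + 2) → ℝ) (t : ℝ) (α : Fin (d + 1) → ℝ) :
    |gre d j₀ a x t α| ≤ 1 :=
  abs_le.2 ⟨by linarith [gre_nonneg d j₀ a x t α], gre_le_one d j₀ a x t α⟩

lemma intOn_gre_AA (x : Fin (d + 2) → ℝ) (t : ℝ) :
    IntegrableOn (gre d j₀ a x t) (AA d) volume :=
  integrableOn_of_bound (measurableSet_AA d) (volume_AA_lt_top d)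
    (measurable_gre_alpha d j₀ a x t) 1 (fun α _ => gre_abs_le_one d j₀ a x t α)

lemma setInt_gre_nonneg (x : Fin (d + 2) → ℝ) (t : ℝ) :
    0 ≤ ∫ α in AA d, gre d j₀ a x t α :=
  setIntegral_nonneg (measurableSet_AA d) fun α _ => gre_nonneg d j₀ a x t α

lemma setInt_gre_abs_le (x : Fin (d + 2) → ℝ) (t : ℝ) :
    |∫ α in AA d, gre d j₀ a x t α| ≤ 1 := by
  have h := norm_setIntegral_le_of_norm_le_const (μ := volume) (s := AA d)
    (f := gre d j₀ a x t) (C := 1) (volume_AA_lt_top d)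
    (fun α _ => by rw [Real.norm_eq_abs]; exact gre_abs_le_one d j₀ a x t α)
  rw [Real.norm_eq_abs] at h
  calc |∫ α in AA d, gre d j₀ a x t α| ≤ 1 * (volume (AA d)).toReal := h
  _ = 1 := by rw [volume_AA]; simp

/-! ### HH lemmas -/

lemma HH_zero_small (hj1 : 1 ≤ j₀) (hj2 : j₀ ≤ d + 2) (ha : 0 < a)
    (x : Fin (d + 2) → ℝ) {t : ℝ} (ht : |t| < a) : HH d j₀ a x t = 0 := by
  unfold HH
  rw [setIntegral_congr_fun (measurableSet_AA d)
    (fun α hα => gre_zero_small d j₀ a hj1 hj2 ha ht hα), integral_zero, zero_div]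

lemma HH_zero_big (hj1 : 1 ≤ j₀) (hj2 : j₀ ≤ d + 2) (ha : 0 < a)
    (x : Fin (d + 2) → ℝ) {t : ℝ} (ht : 2 < |t|) : HH d j₀ a x t = 0 := by
  unfold HH
  rw [setIntegral_congr_fun (measurableSet_AA d)
    (fun α hα => gre_zero_big d j₀ a hj1 hj2 ha ht hα), integral_zero, zero_div]

lemma HH_zero_notBB (hj1 : 1 ≤ j₀) {x : Fin (d + 2) → ℝ} (hx : x ∉ BB d j₀ a) (t : ℝ) :
    HH d j₀ a x t = 0 := by
  unfold HH
  rw [setIntegral_congr_fun (measurableSet_AA d)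
    (fun α _ => gre_zero_notBB d j₀ a hj1 hx t α), integral_zero, zero_div]

lemma HH_nonneg (hj1 : 1 ≤ j₀) (hj2 : j₀ ≤ d + 2) (ha : 0 < a)
    (x : Fin (d + 2) → ℝ) (t : ℝ) : 0 ≤ HH d j₀ a x t := by
  rcases lt_trichotomy t 0 with hneg | hzero | hpos
  · unfold HH
    rw [setIntegral_congr_fun (measurableSet_AA d)
      (fun α hα => gre_zero_nonpos d j₀ a hj1 hj2 ha hneg.le hα), integral_zero, zero_div]
  · simp [HH, hzero]
  · exact div_nonneg (setInt_gre_nonneg d j₀ a x t) hpos.le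

lemma HH_abs_le (x : Fin (d + 2) → ℝ) (t : ℝ) : |HH d j₀ a x t| ≤ 1 / |t| := by
  rcases eq_or_ne t 0 with rfl | ht
  · simp [HH]
  · unfold HH
    rw [abs_div]
    have htpos : 0 < |t| := abs_pos.2 ht
    exact (div_le_div_iff_of_pos_right htpos).2 (setInt_gre_abs_le d j₀ a x t)

lemma measurable_HH_t (x : Fin (d + 2) → ℝ) : Measurable (fun t => HH d j₀ a x t) := by
  have hmeas : Measurable (fun q : ℝ × (Fin (d + 1) → ℝ) => gre d j₀ a x q.1 q.2) :=
    (measurable_gre d j₀ a).comp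
      (((measurable_const.prodMk measurable_fst)).prodMk measurable_snd)
  have h2 := hmeas.stronglyMeasurable.integral_prod_right' (ν := volume.restrict (AA d))
  exact (h2.measurable).div measurable_id

lemma measurable_HH_xt :
    Measurable (fun q : (Fin (d + 2) → ℝ) × ℝ => HH d j₀ a q.1 q.2) := by
  have h2 := (measurable_gre d j₀ a).stronglyMeasurable.integral_prod_right'
    (ν := volume.restrict (AA d))
  exact (h2.measurable).div measurable_snd

lemma measurableSet_S (ε : ℝ) : MeasurableSet {t : ℝ | ε < |t|} :=
  measurableSet_lt measurable_const measurable_abs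

lemma intOn_HH (hj1 : 1 ≤ j₀) (hj2 : j₀ ≤ d + 2) (ha : 0 < a)
    (x : Fin (d + 2) → ℝ) {ε : ℝ} (hε : 0 < ε) :
    IntegrableOn (HH d j₀ a x) {t : ℝ | ε < |t|} volume := by
  set S := {t : ℝ | ε < |t|}
  have hSmeas : MeasurableSet S := measurableSet_S ε
  have h1 : IntegrableOn (HH d j₀ a x) (S ∩ Icc (-2) 2) volume := by
    apply integrableOn_of_bound (hSmeas.inter measurableSet_Icc)
      (lt_of_le_of_lt (measure_mono Set.inter_subset_right)
        (by rw [Real.volume_Icc]; exact ENNReal.ofReal_lt_top))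
      (measurable_HH_t d j₀ a x) (1 / ε)
    intro t ht
    calc |HH d j₀ a x t| ≤ 1 / |t| := HH_abs_le d j₀ a x t
    _ ≤ 1 / ε := by
        apply one_div_le_one_div_of_le hε
        exact le_of_lt ht.1
  have h2 : IntegrableOn (HH d j₀ a x) (S \ Icc (-2) 2) volume := by
    have hz : Set.EqOn (HH d j₀ a x) (fun _ => (0:ℝ)) (S \ Icc (-2) 2) := by
      intro t ht
      have hbig : 2 < |t| := by
        rcases ht with ⟨_, hnot⟩
        rw [Set.mem_Icc, not_and_or, not_le, not_le] at hnot
        rcases hnot with h | h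
        · rw [abs_of_neg (by linarith)]; linarith
        · rw [abs_of_pos (by linarith)]; linarith
      exact HH_zero_big d j₀ a hj1 hj2 ha x hbig
    exact (integrableOn_congr_fun hz (hSmeas.diff measurableSet_Icc)).2 integrableOn_zero
  have := h1.union h2
  rwa [Set.inter_union_diff] at this

lemma GG_restrict (hj1 : 1 ≤ j₀) (hj2 : j₀ ≤ d + 2) (ha : 0 < a)
    (x : Fin (d + 2) → ℝ) {ε : ℝ} (hε : 0 < ε) :
    GG d j₀ a ε x = ∫ t in {t : ℝ | ε < |t|} ∩ Icc (-2) 2, HH d j₀ a x t := by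
  unfold GG
  rw [← integral_indicator (measurableSet_S ε),
      ← integral_indicator ((measurableSet_S ε).inter measurableSet_Icc)]
  apply integral_congr_ae
  apply MeasureTheory.ae_of_all
  intro t
  rw [Set.indicator_apply, Set.indicator_apply]
  by_cases hbig : 2 < |t|
  · rw [HH_zero_big d j₀ a hj1 hj2 ha x hbig]
    split <;> split <;> rfl
  · push_neg at hbig
    have hIcc : t ∈ Icc (-2:ℝ) 2 := abs_le.1 hbig
    by_cases hS : t ∈ {t : ℝ | ε < |t|}
    · rw [if_pos hS, if_pos ⟨hS, hIcc⟩]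
    · rw [if_neg hS, if_neg (fun hmem => hS hmem.1)]

lemma GG_nonneg (hj1 : 1 ≤ j₀) (hj2 : j₀ ≤ d + 2) (ha : 0 < a)
    (ε : ℝ) (x : Fin (d + 2) → ℝ) : 0 ≤ GG d j₀ a ε x :=
  setIntegral_nonneg (measurableSet_S ε) fun t _ => HH_nonneg d j₀ a hj1 hj2 ha x t

lemma GG_abs_le (hj1 : 1 ≤ j₀) (hj2 : j₀ ≤ d + 2) (ha : 0 < a)
    (x : Fin (d + 2) → ℝ) {ε : ℝ} (hε : 0 < ε) :
    |GG d j₀ a ε x| ≤ 1 / ε * 4 := by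
  rw [GG_restrict d j₀ a hj1 hj2 ha x hε]
  have hvol : volume ({t : ℝ | ε < |t|} ∩ Icc (-2) 2) < ⊤ :=
    lt_of_le_of_lt (measure_mono Set.inter_subset_right)
      (by rw [Real.volume_Icc]; exact ENNReal.ofReal_lt_top)
  have h := norm_setIntegral_le_of_norm_le_const (μ := volume)
    (s := {t : ℝ | ε < |t|} ∩ Icc (-2) 2) (f := HH d j₀ a x) (C := 1 / ε) hvol
    (fun t ht => by
      rw [Real.norm_eq_abs]
      calc |HH d j₀ a x t| ≤ 1 / |t| := HH_abs_le d j₀ a x t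
      _ ≤ 1 / ε := one_div_le_one_div_of_le hε (le_of_lt ht.1))
  rw [Real.norm_eq_abs] at h
  apply h.trans
  apply mul_le_mul_of_nonneg_left _ (by positivity)
  have : volume ({t : ℝ | ε < |t|} ∩ Icc (-2) 2) ≤ ENNReal.ofReal 4 := by
    apply le_trans (measure_mono Set.inter_subset_right)
    rw [Real.volume_Icc]
    apply ENNReal.ofReal_le_ofReal; norm_num
  calc (volume ({t : ℝ | ε < |t|} ∩ Icc (-2) 2)).toReal ≤ (ENNReal.ofReal 4).toReal :=
    ENNReal.toReal_mono ENNReal.ofReal_ne_top this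
  _ = 4 := by rw [ENNReal.toReal_ofReal]; norm_num

lemma GG_zero_notBB (hj1 : 1 ≤ j₀) {x : Fin (d + 2) → ℝ} (hx : x ∉ BB d j₀ a) (ε : ℝ) :
    GG d j₀ a ε x = 0 := by
  unfold GG
  rw [setIntegral_congr_fun (measurableSet_S ε)
    (fun t _ => HH_zero_notBB d j₀ a hj1 hx t), integral_zero]

lemma measurable_GG (ε : ℝ) : Measurable (GG d j₀ a ε) := by
  have h2 := (measurable_HH_xt d j₀ a).stronglyMeasurable.integral_prod_right'
    (ν := volume.restrict {t : ℝ | ε < |t|})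
  exact h2.measurable

lemma integrable_GG (hj1 : 1 ≤ j₀) (hj2 : j₀ ≤ d + 2) (ha : 0 < a)
    {ε : ℝ} (hε : 0 < ε) : Integrable (GG d j₀ a ε) volume := by
  refine Integrable.mono' (g := (BB d j₀ a).indicator fun _ => 1 / ε * 4) ?_
    (measurable_GG d j₀ a ε).aestronglyMeasurable ?_
  · rw [integrable_indicator_iff (measurableSet_BB d j₀ a)]
    exact integrableOn_const (volume_BB_lt_top d j₀ a).ne
  · apply MeasureTheory.ae_of_all
    intro x
    classical
    rw [Real.norm_eq_abs, Set.indicator_apply]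
    by_cases hx : x ∈ BB d j₀ a
    · rw [if_pos hx]; exact GG_abs_le d j₀ a hj1 hj2 ha x hε
    · rw [if_neg hx, GG_zero_notBB d j₀ a hj1 hx ε, abs_zero]

lemma GG_eq (hj1 : 1 ≤ j₀) (hj2 : j₀ ≤ d + 2) (ha : 0 < a)
    (x : Fin (d + 2) → ℝ) {ε : ℝ} (hε : 0 < ε) (hε2 : ε ≤ a / 2) :
    GG d j₀ a ε x = GG d j₀ a (a / 2) x := by
  unfold GG
  rw [← integral_indicator (measurableSet_S ε), ← integral_indicator (measurableSet_S (a / 2))]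
  apply integral_congr_ae
  apply MeasureTheory.ae_of_all
  intro t
  rw [Set.indicator_apply, Set.indicator_apply]
  by_cases hsm : |t| < a
  · rw [HH_zero_small d j₀ a hj1 hj2 ha x hsm]
    split <;> split <;> rfl
  · push_neg at hsm
    have h1 : t ∈ {t : ℝ | ε < |t|} := by
      rw [Set.mem_setOf_eq]; linarith
    have h2 : t ∈ {t : ℝ | a / 2 < |t|} := by
      rw [Set.mem_setOf_eq]; linarith
    rw [if_pos h1, if_pos h2]

lemma Tre_eq (hj1 : 1 ≤ j₀) (hj2 : j₀ ≤ d + 2) (ha : 0 < a)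
    {ε : ℝ} (hε : 0 < ε) (hε2 : ε ≤ a / 2) :
    Tre d j₀ a ε = Tre d j₀ a (a / 2) := by
  unfold Tre
  apply integral_congr_ae
  exact MeasureTheory.ae_of_all _ (fun x => GG_eq d j₀ a hj1 hj2 ha x hε hε2)

/-! ### complex form -/

lemma simplexTrunc_eq (ε : ℝ) :
    simplexTrunc d (FF d j₀ a) ε = ((Tre d j₀ a ε : ℝ) : ℂ) := by
  have hα : ∀ (x : Fin (d + 2) → ℝ) (t : ℝ),
      (∫ α in (Set.univ.pi fun _ : Fin (d + 1) => Set.Icc (0:ℝ) 1),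
        FF d j₀ a 0 x *
          (∏ j : Fin (d + 1), FF d j₀ a (j.1 + 1) (x + Pi.single j.castSucc (t * α j))) *
          FF d j₀ a (d + 2) (x + Pi.single (Fin.last (d + 1)) t)) / (t : ℂ)
        = ((HH d j₀ a x t : ℝ) : ℂ) := by
    intro x t
    have h1 : (∫ α in (Set.univ.pi fun _ : Fin (d + 1) => Set.Icc (0:ℝ) 1),
        FF d j₀ a 0 x *
          (∏ j : Fin (d + 1), FF d j₀ a (j.1 + 1) (x + Pi.single j.castSucc (t * α j))) *
          FF d j₀ a (d + 2) (x + Pi.single (Fin.last (d + 1)) t))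
        = (((∫ α in AA d, gre d j₀ a x t α : ℝ) : ℝ) : ℂ) := by
      rw [show (Set.univ.pi fun _ : Fin (d + 1) => Set.Icc (0:ℝ) 1) = AA d from rfl]
      have hio : (∫ α in AA d, ((gre d j₀ a x t α : ℝ) : ℂ))
          = (((∫ α in AA d, gre d j₀ a x t α : ℝ)) : ℂ) := integral_ofReal
      rw [← hio]
      apply integral_congr_ae
      apply MeasureTheory.ae_of_all
      intro α
      unfold FF gre
      push_cast
      ring
    rw [h1]
    unfold HH
    push_cast
    ring
  have hx : ∀ x : Fin (d + 2) → ℝ,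
      (∫ t in {t : ℝ | ε < |t|},
        (∫ α in (Set.univ.pi fun _ : Fin (d + 1) => Set.Icc (0:ℝ) 1),
          FF d j₀ a 0 x *
            (∏ j : Fin (d + 1), FF d j₀ a (j.1 + 1) (x + Pi.single j.castSucc (t * α j))) *
            FF d j₀ a (d + 2) (x + Pi.single (Fin.last (d + 1)) t)) / (t : ℂ))
        = ((GG d j₀ a ε x : ℝ) : ℂ) := by
    intro x
    have h2 : (∫ t in {t : ℝ | ε < |t|}, ((HH d j₀ a x t : ℝ) : ℂ))
        = ((GG d j₀ a ε x : ℝ) : ℂ) := integral_ofReal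
    rw [← h2]
    exact integral_congr_ae (MeasureTheory.ae_of_all _ (fun t => hα x t))
  unfold simplexTrunc
  have h3 : (∫ x : Fin (d + 2) → ℝ, ((GG d j₀ a ε x : ℝ) : ℂ))
      = ((Tre d j₀ a ε : ℝ) : ℂ) := integral_ofReal
  rw [← h3]
  exact integral_congr_ae (MeasureTheory.ae_of_all _ hx)

lemma hasSimplexForm_FF (hj1 : 1 ≤ j₀) (hj2 : j₀ ≤ d + 2) (ha : 0 < a) :
    HasSimplexForm d (FF d j₀ a) ((Tre d j₀ a (a / 2) : ℝ) : ℂ) := by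
  unfold HasSimplexForm
  apply Filter.Tendsto.congr' _ tendsto_const_nhds
  have hmem : Set.Ioc (0:ℝ) (a / 2) ∈ nhdsWithin (0:ℝ) (Set.Ioi 0) :=
    Ioc_mem_nhdsGT_of_mem ⟨le_refl 0, by positivity⟩
  filter_upwards [hmem] with ε hε
  rw [simplexTrunc_eq, Tre_eq d j₀ a hj1 hj2 ha hε.1 hε.2]

/-! ### lower bound -/

def X0 : Set (Fin (d + 2) → ℝ) :=
  Set.univ.pi fun i => if i = k0 d j₀ then Icc (0:ℝ) a else Icc (0:ℝ) 1

def A2 : Set (Fin (d + 1) → ℝ) := Set.univ.pi fun _ => Icc (1/2 : ℝ) 1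

lemma measurableSet_X0 : MeasurableSet (X0 d j₀ a) :=
  MeasurableSet.univ_pi fun _ => by split <;> exact measurableSet_Icc

lemma measurableSet_A2 : MeasurableSet (A2 d) :=
  MeasurableSet.univ_pi fun _ => measurableSet_Icc

lemma volume_X0 (ha : 0 < a) : volume (X0 d j₀ a) = ENNReal.ofReal a := by
  unfold X0
  rw [volume_pi_pi]
  have h : ∀ i : Fin (d + 2),
      volume (if i = k0 d j₀ then Icc (0:ℝ) a else Icc (0:ℝ) 1)
        = if i = k0 d j₀ then ENNReal.ofReal a else 1 := by
    intro i; split <;> simp [Real.volume_Icc]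
  rw [Finset.prod_congr rfl (fun i _ => h i),
    Finset.prod_ite_eq' Finset.univ (k0 d j₀) (fun _ => ENNReal.ofReal a)]
  simp

lemma volume_A2 : volume (A2 d) = ENNReal.ofReal ((1/2 : ℝ) ^ (d + 1)) := by
  unfold A2
  rw [volume_pi_pi]
  have h : ∀ _i : Fin (d + 1), volume (Icc (1/2 : ℝ) 1) = ENNReal.ofReal (1/2 : ℝ) := by
    intro i; rw [Real.volume_Icc]; norm_num
  rw [Finset.prod_congr rfl (fun i _ => h i), Finset.prod_const,
    ← ENNReal.ofReal_pow (by norm_num)]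
  simp

lemma volume_BB_eq : volume (BB d j₀ a) = ENNReal.ofReal a * ENNReal.ofReal 2 ^ (d + 1) := by
  unfold BB
  rw [volume_pi_pi]
  have h : ∀ i : Fin (d + 2),
      volume (if i = k0 d j₀ then Icc (0:ℝ) a else Icc (0:ℝ) 2)
        = if i = k0 d j₀ then ENNReal.ofReal a else ENNReal.ofReal 2 := by
    intro i; split <;> simp [Real.volume_Icc]
  rw [Finset.prod_congr rfl (fun i _ => h i)]
  rw [← Finset.mul_prod_erase Finset.univ _ (Finset.mem_univ (k0 d j₀)), if_pos rfl]
  congr 1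
  have h2 : ∀ i ∈ Finset.univ.erase (k0 d j₀),
      (if i = k0 d j₀ then ENNReal.ofReal a else ENNReal.ofReal 2) = ENNReal.ofReal 2 := by
    intro i hi
    exact if_neg (Finset.mem_erase.1 hi).1
  rw [Finset.prod_congr rfl h2, Finset.prod_const,
    Finset.card_erase_of_mem (Finset.mem_univ _), Finset.card_univ]
  simp

lemma X0_subset_BB (ha8 : a ≤ 1/8) : X0 d j₀ a ⊆ BB d j₀ a := by
  intro x hx
  rw [mem_BB_iff]
  intro i
  have h := (Set.mem_univ_pi.1 hx) i
  split
  · rename_i hik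
    rw [if_pos hik] at h
    exact h
  · rename_i hik
    rw [if_neg hik] at h
    simp only [mem_Icc] at h ⊢
    exact ⟨h.1, by linarith [h.2]⟩

lemma castSucc_ne_k0 (hj1 : 1 ≤ j₀) {j : Fin (d + 1)} (hne : ¬ (j.1 + 1 = j₀)) :
    ¬ (j.castSucc = k0 d j₀ ∧ j₀ ≤ d + 2) → True := fun _ => trivial

lemma gre_one (hj1 : 1 ≤ j₀) (hj2 : j₀ ≤ d + 2) (ha : 0 < a) (ha8 : a ≤ 1/8)
    {x : Fin (d + 2) → ℝ} (hx : x ∈ X0 d j₀ a) {t : ℝ} (ht' : t ∈ Icc (4 * a) 1)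
    {α : Fin (d + 1) → ℝ} (hα : α ∈ A2 d) : gre d j₀ a x t α = 1 := by
  have hxi : ∀ i : Fin (d + 2), x i ∈ (if i = k0 d j₀ then Icc (0:ℝ) a else Icc (0:ℝ) 1) :=
    fun i => (Set.mem_univ_pi.1 hx) i
  have hxk : x (k0 d j₀) ∈ Icc (0:ℝ) a := by have := hxi (k0 d j₀); rwa [if_pos rfl] at this
  have hxother : ∀ i : Fin (d + 2), i ≠ k0 d j₀ → x i ∈ Icc (0:ℝ) 1 := by
    intro i hi; have := hxi i; rwa [if_neg hi] at this
  have hαj : ∀ j : Fin (d + 1), α j ∈ Icc (1/2 : ℝ) 1 := fun j => (Set.mem_univ_pi.1 hα) j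
  simp only [mem_Icc] at hxk
  have ht : 4 * a ≤ t ∧ t ≤ 1 := by simpa only [mem_Icc] using ht'
  have ht0 : 0 < t := lt_of_lt_of_le (by positivity) ht.1
  have hxBB : x ∈ BB d j₀ a := X0_subset_BB d j₀ a ha8 hx
  unfold gre
  -- first factor
  have h0 : fre d j₀ a 0 x = 1 := by
    unfold fre SS
    rw [if_neg (by omega : ¬ 0 = j₀)]
    exact Set.indicator_of_mem hxBB _
  -- middle factors
  have hmid : ∀ j : Fin (d + 1),
      fre d j₀ a (j.1 + 1) (x + Pi.single j.castSucc (t * α j)) = 1 := by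
    intro j
    have hαj' : 1/2 ≤ α j ∧ α j ≤ 1 := by simpa only [mem_Icc] using hαj j
    have htα0 : 0 ≤ t * α j := mul_nonneg ht0.le (by linarith [hαj'.1])
    have htα1 : t * α j ≤ 1 := mul_le_one₀ ht.2 (by linarith [hαj'.1]) hαj'.2
    by_cases hc : j.1 + 1 = j₀
    · -- this is the slab factor
      have hcast : j.castSucc = k0 d j₀ := by
        apply Fin.ext
        rw [k0_val d j₀ hj2]
        simp only [Fin.coe_castSucc]
        omega
      rw [hc]
      unfold fre SS
      rw [if_pos rfl]
      apply Set.indicator_of_mem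
      unfold SL
      rw [Set.mem_setOf_eq, ← hcast]
      simp only [Pi.add_apply, Pi.single_eq_same, mem_Icc]
      rw [← hcast] at hxk
      constructor
      · have h4 : 4 * a * (1/2) ≤ t * α j :=
          mul_le_mul ht.1 hαj'.1 (by norm_num) ht0.le
        nlinarith [hxk.1]
      · nlinarith [hxk.2]
    · -- box factor
      rw [show fre d j₀ a (j.1 + 1) = (BB d j₀ a).indicator (fun _ => (1:ℝ)) by
        unfold fre SS; rw [if_neg hc]]
      apply Set.indicator_of_mem
      rw [mem_BB_iff]
      intro i
      by_cases hi : i = j.castSucc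
      · have hik : ¬ (i = k0 d j₀) := by
          intro hcon
          have h5 := congrArg Fin.val hcon
          rw [k0_val d j₀ hj2] at h5
          rw [hi] at h5
          simp only [Fin.coe_castSucc] at h5
          omega
        rw [if_neg hik]
        have hxi' : 0 ≤ x i ∧ x i ≤ 1 := by simpa only [mem_Icc] using hxother i hik
        simp only [Pi.add_apply, Pi.single_apply, if_pos hi, mem_Icc]
        constructor
        · linarith [hxi'.1]
        · linarith [hxi'.2]
      · simp only [Pi.add_apply, Pi.single_apply, if_neg hi, add_zero]
        by_cases hik : i = k0 d j₀
        · rw [if_pos hik, hik]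
          simp only [mem_Icc]
          exact hxk
        · rw [if_neg hik]
          have hxi' : 0 ≤ x i ∧ x i ≤ 1 := by simpa only [mem_Icc] using hxother i hik
          simp only [mem_Icc]
          exact ⟨hxi'.1, by linarith [hxi'.2]⟩
  -- last factor
  have hlast : fre d j₀ a (d + 2) (x + Pi.single (Fin.last (d + 1)) t) = 1 := by
    rcases lt_or_eq_of_le hj2 with hlt | heq
    · rw [show fre d j₀ a (d + 2) = (BB d j₀ a).indicator (fun _ => (1:ℝ)) by
        unfold fre SS; rw [if_neg (by omega : ¬ d + 2 = j₀)]]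
      apply Set.indicator_of_mem
      rw [mem_BB_iff]
      intro i
      have hne_last : ¬ (Fin.last (d + 1) = k0 d j₀) := by
        intro hcon
        have h5 := congrArg Fin.val hcon
        rw [k0_val d j₀ hj2] at h5
        simp only [Fin.val_last] at h5
        omega
      by_cases hi : i = Fin.last (d + 1)
      · have hik : ¬ (i = k0 d j₀) := by rw [hi]; exact hne_last
        rw [if_neg hik]
        have hxi' : 0 ≤ x i ∧ x i ≤ 1 := by simpa only [mem_Icc] using hxother i hik
        simp only [Pi.add_apply, Pi.single_apply, if_pos hi, mem_Icc]
        exact ⟨by linarith [hxi'.1], by linarith [hxi'.2, ht.2]⟩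
      · simp only [Pi.add_apply, Pi.single_apply, if_neg hi, add_zero]
        by_cases hik : i = k0 d j₀
        · rw [if_pos hik, hik]
          simp only [mem_Icc]
          exact hxk
        · rw [if_neg hik]
          have hxi' : 0 ≤ x i ∧ x i ≤ 1 := by simpa only [mem_Icc] using hxother i hik
          simp only [mem_Icc]
          exact ⟨hxi'.1, by linarith [hxi'.2]⟩
    · -- j₀ = d + 2 : slab factor at the last slot
      have hk : k0 d j₀ = Fin.last (d + 1) := k0_eq_last d j₀ heq
      rw [show fre d j₀ a (d + 2) = (SL d j₀ a).indicator (fun _ => (1:ℝ)) by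
        unfold fre SS; rw [if_pos heq.symm]]
      apply Set.indicator_of_mem
      unfold SL
      rw [Set.mem_setOf_eq, hk]
      simp only [Pi.add_apply, Pi.single_eq_same, mem_Icc]
      rw [hk] at hxk
      constructor
      · nlinarith [hxk.1, ht.1]
      · nlinarith [hxk.2, ht.2]
  rw [h0, hlast, Finset.prod_congr rfl (fun j _ => hmid j), Finset.prod_const_one]
  norm_num

lemma A2_subset_AA : A2 d ⊆ AA d := by
  apply Set.pi_mono
  intro i _
  exact Icc_subset_Icc (by norm_num) (le_refl 1)

lemma HH_lower (hj1 : 1 ≤ j₀) (hj2 : j₀ ≤ d + 2) (ha : 0 < a) (ha8 : a ≤ 1/8)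
    {x : Fin (d + 2) → ℝ} (hx : x ∈ X0 d j₀ a) {t : ℝ} (ht : t ∈ Icc (4 * a) 1) :
    (1/2 : ℝ) ^ (d + 1) * (1 / t) ≤ HH d j₀ a x t := by
  have ht0 : 0 < t := lt_of_lt_of_le (by positivity) ht.1
  have h1 : ∫ α in A2 d, gre d j₀ a x t α = (1/2 : ℝ) ^ (d + 1) := by
    rw [setIntegral_congr_fun (measurableSet_A2 d)
      (fun α hα => gre_one d j₀ a hj1 hj2 ha ha8 hx ht hα)]
    rw [setIntegral_const, measureReal_def, volume_A2]
    rw [ENNReal.toReal_ofReal (by positivity)]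
    simp
  have h2 : ∫ α in A2 d, gre d j₀ a x t α ≤ ∫ α in AA d, gre d j₀ a x t α := by
    apply setIntegral_mono_set (intOn_gre_AA d j₀ a x t)
    · exact Filter.Eventually.of_forall (fun α => gre_nonneg d j₀ a x t α)
    · exact HasSubset.Subset.eventuallyLE (A2_subset_AA d)
  unfold HH
  rw [show (1/2 : ℝ) ^ (d + 1) * (1 / t) = ((1/2 : ℝ) ^ (d + 1)) / t by ring]
  rw [← h1]
  exact (div_le_div_iff_of_pos_right ht0).2 h2

lemma integral_one_div_Icc (ha : 0 < a) (ha8 : a ≤ 1/8) :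
    ∫ t in Icc (4 * a) 1, (1 / t : ℝ) = Real.log (1 / (4 * a)) := by
  have h4a : 0 < 4 * a := by positivity
  have h4a1 : 4 * a ≤ 1 := by linarith
  rw [MeasureTheory.integral_Icc_eq_integral_Ioc,
    ← intervalIntegral.integral_of_le h4a1]
  rw [integral_one_div]
  intro hmem
  rw [Set.uIcc_of_le h4a1] at hmem
  exact absurd hmem.1 (by linarith)

lemma GG_lower (hj1 : 1 ≤ j₀) (hj2 : j₀ ≤ d + 2) (ha : 0 < a) (ha8 : a ≤ 1/8)
    {x : Fin (d + 2) → ℝ} (hx : x ∈ X0 d j₀ a) :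
    (1/2 : ℝ) ^ (d + 1) * Real.log (1 / (4 * a)) ≤ GG d j₀ a (a / 2) x := by
  have hsub : Icc (4 * a) 1 ⊆ {t : ℝ | a / 2 < |t|} := by
    intro t ht
    rw [Set.mem_setOf_eq]
    have : 4 * a ≤ t := ht.1
    have : t ≤ |t| := le_abs_self t
    linarith
  have hstep1 : ∫ t in Icc (4 * a) 1, HH d j₀ a x t ≤ GG d j₀ a (a / 2) x := by
    unfold GG
    apply setIntegral_mono_set (intOn_HH d j₀ a hj1 hj2 ha x (by positivity))
    · exact Filter.Eventually.of_forall (fun t => HH_nonneg d j₀ a hj1 hj2 ha x t)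
    · exact HasSubset.Subset.eventuallyLE hsub
  have hstep2 : ∫ t in Icc (4 * a) 1, ((1/2 : ℝ) ^ (d + 1) * (1 / t))
      ≤ ∫ t in Icc (4 * a) 1, HH d j₀ a x t := by
    apply setIntegral_mono_on
    · apply ContinuousOn.integrableOn_compact isCompact_Icc
      apply ContinuousOn.mul continuousOn_const
      apply ContinuousOn.div continuousOn_const continuousOn_id
      intro t ht
      exact ne_of_gt (lt_of_lt_of_le (by positivity) ht.1)
    · exact (intOn_HH d j₀ a hj1 hj2 ha x (by positivity : (0:ℝ) < a / 2)).mono_set hsub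
    · exact measurableSet_Icc
    · exact fun t ht => HH_lower d j₀ a hj1 hj2 ha ha8 hx ht
  have hstep3 : ∫ t in Icc (4 * a) 1, ((1/2 : ℝ) ^ (d + 1) * (1 / t))
      = (1/2 : ℝ) ^ (d + 1) * Real.log (1 / (4 * a)) := by
    rw [show (fun t => ((1/2 : ℝ) ^ (d + 1) * (1 / t))) = (fun t => ((1/2 : ℝ) ^ (d + 1)) • (1 / t : ℝ)) from rfl]
    rw [integral_smul]
    rw [integral_one_div_Icc a ha ha8]
    simp [smul_eq_mul]
  linarith [hstep1, hstep2, hstep3.symm.le]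

lemma Tre_lower (hj1 : 1 ≤ j₀) (hj2 : j₀ ≤ d + 2) (ha : 0 < a) (ha8 : a ≤ 1/8) :
    a * ((1/2 : ℝ) ^ (d + 1) * Real.log (1 / (4 * a))) ≤ Tre d j₀ a (a / 2) := by
  set κ : ℝ := (1/2 : ℝ) ^ (d + 1) * Real.log (1 / (4 * a)) with hκ
  have hX0fin : volume (X0 d j₀ a) < ⊤ := by
    rw [volume_X0 d j₀ a ha]; exact ENNReal.ofReal_lt_top
  have h1 : ∫ _x in X0 d j₀ a, κ ≤ ∫ x in X0 d j₀ a, GG d j₀ a (a / 2) x := by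
    apply setIntegral_mono_on
    · exact integrableOn_const hX0fin.ne
    · exact (integrable_GG d j₀ a hj1 hj2 ha (by positivity : (0:ℝ) < a / 2)).integrableOn
    · exact measurableSet_X0 d j₀ a
    · exact fun x hx => GG_lower d j₀ a hj1 hj2 ha ha8 hx
  have h2 : ∫ x in X0 d j₀ a, GG d j₀ a (a / 2) x ≤ ∫ x, GG d j₀ a (a / 2) x := by
    apply setIntegral_le_integral (integrable_GG d j₀ a hj1 hj2 ha (by positivity : (0:ℝ) < a / 2))
    exact MeasureTheory.ae_of_all _ (fun x => GG_nonneg d j₀ a hj1 hj2 ha (a / 2) x)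
  have h3 : ∫ _x in X0 d j₀ a, κ = a * κ := by
    rw [setIntegral_const, measureReal_def, volume_X0 d j₀ a ha, ENNReal.toReal_ofReal ha.le, smul_eq_mul]
  unfold Tre
  linarith [h1, h2, h3.symm.le]

/-! ### norms -/

lemma FF_eq_indicator (j : ℕ) (hj : ¬ (j = j₀)) :
    FF d j₀ a j = (BB d j₀ a).indicator fun _ => (1:ℂ) := by
  funext y
  unfold FF fre SS
  rw [if_neg hj]
  classical
  rw [Set.indicator_apply, Set.indicator_apply]
  split <;> simp

lemma memℒp_FF (hj1 : 1 ≤ j₀) (p : ℕ → ENNReal) (hpj₀ : p j₀ = ⊤) (j : ℕ) (_hj : j ≤ d + 2) :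
    MemLp (FF d j₀ a j) (p j) volume := by
  by_cases h : j = j₀
  · rw [h, hpj₀]
    apply memLp_top_of_bound
      ((Complex.measurable_ofReal.comp (measurable_fre d j₀ a j₀)).aestronglyMeasurable) 1
    apply MeasureTheory.ae_of_all
    intro y
    simp only [Function.comp_apply, Complex.norm_real, Real.norm_eq_abs]
    exact abs_le.2 ⟨by linarith [fre_nonneg d j₀ a j₀ y], fre_le_one d j₀ a j₀ y⟩
  · rw [FF_eq_indicator d j₀ a j h]
    exact memLp_indicator_const _ (measurableSet_BB d j₀ a) _
      (Or.inr (volume_BB_lt_top d j₀ a).ne)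

lemma volume_BB_toReal (ha : 0 < a) : (volume (BB d j₀ a)).toReal = a * 2 ^ (d + 1) := by
  rw [volume_BB_eq, ENNReal.toReal_mul, ENNReal.toReal_pow, ENNReal.toReal_ofReal ha.le,
    ENNReal.toReal_ofReal (by norm_num : (0:ℝ) ≤ 2)]

lemma volume_BB_ne_zero (ha : 0 < a) : volume (BB d j₀ a) ≠ 0 := by
  rw [volume_BB_eq]
  apply mul_ne_zero
  · exact (ENNReal.ofReal_pos.2 ha).ne'
  · exact pow_ne_zero _ (ENNReal.ofReal_pos.2 (by norm_num : (0:ℝ) < 2)).ne'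

lemma prod_eLpNorm_le (hj1 : 1 ≤ j₀) (hj2 : j₀ ≤ d + 2) (ha : 0 < a)
    (p : ℕ → ENNReal) (hpj₀ : p j₀ = ⊤) (hp : ∀ j ≤ d + 2, 1 ≤ p j)
    (hsum : ∑ j ∈ Finset.range (d + 3), (p j)⁻¹ = 1) :
    ∏ j ∈ Finset.range (d + 3), (eLpNorm (FF d j₀ a j) (p j) volume).toReal
      ≤ a * 2 ^ (d + 1) := by
  set m : ℝ := a * 2 ^ (d + 1) with hm
  have hm0 : 0 < m := by positivity
  have hfin : ∀ j ∈ Finset.range (d + 3), (p j)⁻¹ ≠ ⊤ := by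
    intro j hj
    have hjle : j ≤ d + 2 := by have := Finset.mem_range.1 hj; omega
    have hp1 := hp j hjle
    rw [ENNReal.inv_ne_top]
    intro h0
    rw [h0] at hp1
    exact absurd hp1 (by norm_num)
  have hsumR : ∑ j ∈ Finset.range (d + 3), ((p j)⁻¹).toReal = 1 := by
    rw [← ENNReal.toReal_sum hfin, hsum, ENNReal.toReal_one]
  have hj₀mem : j₀ ∈ Finset.range (d + 3) := Finset.mem_range.2 (by omega)
  have hj₀term : ((p j₀)⁻¹).toReal = 0 := by rw [hpj₀]; simp
  have hsumErase : ∑ j ∈ (Finset.range (d + 3)).erase j₀, ((p j)⁻¹).toReal = 1 := by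
    rw [Finset.sum_erase (f := fun j => ((p j)⁻¹).toReal) (Finset.range (d + 3)) hj₀term]
    exact hsumR
  have hfac : ∀ j ∈ (Finset.range (d + 3)).erase j₀,
      (eLpNorm (FF d j₀ a j) (p j) volume).toReal = m ^ (((p j)⁻¹).toReal) := by
    intro j hj
    obtain ⟨hne, hmem⟩ := Finset.mem_erase.1 hj
    have hjle : j ≤ d + 2 := by have := Finset.mem_range.1 hmem; omega
    have hp1 := hp j hjle
    have hpne0 : p j ≠ 0 := by
      intro h0; rw [h0] at hp1; exact absurd hp1 (by norm_num)
    rw [FF_eq_indicator d j₀ a j hne]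
    by_cases htop : p j = ⊤
    · rw [htop, eLpNorm_exponent_top,
        eLpNormEssSup_indicator_const_eq _ _ (volume_BB_ne_zero d j₀ a ha)]
      simp [htop]
    · rw [eLpNorm_indicator_const (measurableSet_BB d j₀ a) hpne0 htop]
      have hcoef : ‖(1:ℂ)‖ₑ = 1 := by simp
      rw [hcoef]
      rw [one_mul]
      rw [← ENNReal.toReal_rpow, volume_BB_toReal d j₀ a ha]
      congr 1
      rw [ENNReal.toReal_inv, one_div]
  have hprodErase : ∏ j ∈ (Finset.range (d + 3)).erase j₀,
      (eLpNorm (FF d j₀ a j) (p j) volume).toReal = m := by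
    rw [Finset.prod_congr rfl hfac]
    have hexp : ∀ j ∈ (Finset.range (d + 3)).erase j₀,
        m ^ (((p j)⁻¹).toReal) = Real.exp ((((p j)⁻¹).toReal) * Real.log m) := by
      intro j _
      rw [Real.rpow_def_of_pos hm0]
      ring_nf
    rw [Finset.prod_congr rfl hexp, ← Real.exp_sum, ← Finset.sum_mul, hsumErase, one_mul,
      Real.exp_log hm0]
  have hj₀fac : (eLpNorm (FF d j₀ a j₀) (p j₀) volume).toReal ≤ 1 := by
    rw [hpj₀, eLpNorm_exponent_top]
    have hle : eLpNormEssSup (FF d j₀ a j₀) volume ≤ ENNReal.ofReal 1 := by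
      apply eLpNormEssSup_le_of_ae_bound
      apply MeasureTheory.ae_of_all
      intro y
      rw [show FF d j₀ a j₀ y = ((fre d j₀ a j₀ y : ℝ) : ℂ) from rfl, Complex.norm_real,
        Real.norm_eq_abs]
      exact abs_le.2 ⟨by linarith [fre_nonneg d j₀ a j₀ y], fre_le_one d j₀ a j₀ y⟩
    calc (eLpNormEssSup (FF d j₀ a j₀) volume).toReal
        ≤ (ENNReal.ofReal 1).toReal := ENNReal.toReal_mono ENNReal.ofReal_ne_top hle
      _ = 1 := by simp
  calc ∏ j ∈ Finset.range (d + 3), (eLpNorm (FF d j₀ a j) (p j) volume).toReal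
      = (eLpNorm (FF d j₀ a j₀) (p j₀) volume).toReal *
        ∏ j ∈ (Finset.range (d + 3)).erase j₀,
          (eLpNorm (FF d j₀ a j) (p j) volume).toReal :=
        (Finset.mul_prod_erase _ _ hj₀mem).symm
    _ = (eLpNorm (FF d j₀ a j₀) (p j₀) volume).toReal * m := by rw [hprodErase]
    _ ≤ 1 * m := by
        apply mul_le_mul_of_nonneg_right hj₀fac hm0.le
    _ = m := one_mul m

end

end EPC


/-- **Endpoint counterexample.** Let `n = d + 2 ≥ 2` and `j₀ ∈ {1,…,n}`. If `p_{j₀} = ∞`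
and the exponents `p_j ∈ [1,∞]` satisfy `∑_{j=0}^n 1/p_j = 1`, then there is no finite
constant `c` such that `|Λ^{(n)}(F₀,…,F_n)| ≤ c ∏_{j=0}^n ‖F_j‖_{p_j}` holds for all
tuples of functions `F_j ∈ L^{p_j}(ℝⁿ)` for which the form `Λ^{(n)}` is defined. -/
theorem endpoint_estimate_fails
    (d : ℕ) (j₀ : ℕ) (hj₀ : 1 ≤ j₀) (hj₀' : j₀ ≤ d + 2)
    (p : ℕ → ENNReal) (hpj₀ : p j₀ = ⊤)
    (hp : ∀ j ≤ d + 2, 1 ≤ p j)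
    (hsum : ∑ j ∈ Finset.range (d + 3), (p j)⁻¹ = 1) :
    ¬ ∃ c : ℝ,
      ∀ F : ℕ → (Fin (d + 2) → ℝ) → ℂ,
        (∀ j ≤ d + 2, MemLp (F j) (p j) volume) →
        ∀ L : ℂ, HasSimplexForm d F L →
          ‖L‖ ≤ c * ∏ j ∈ Finset.range (d + 3), (eLpNorm (F j) (p j) volume).toReal := by
  rintro ⟨c, hc⟩
  set a : ℝ := min (1/8) ((1/4) * Real.exp (-(|c| * 4 ^ (d + 1) + 1))) with ha_def
  have ha : 0 < a := lt_min (by norm_num) (by positivity)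
  have ha8 : a ≤ 1/8 := min_le_left _ _
  have hL := hc (EPC.FF d j₀ a) (fun j hj => EPC.memℒp_FF d j₀ a hj₀ p hpj₀ j hj)
    ((EPC.Tre d j₀ a (a/2) : ℝ) : ℂ) (EPC.hasSimplexForm_FF d j₀ a hj₀ hj₀' ha)
  have h1 : EPC.Tre d j₀ a (a/2) ≤ ‖((EPC.Tre d j₀ a (a/2) : ℝ) : ℂ)‖ := by
    rw [Complex.norm_real, Real.norm_eq_abs]
    exact le_abs_self _
  have hprod_nonneg : 0 ≤ ∏ j ∈ Finset.range (d + 3),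
      (eLpNorm (EPC.FF d j₀ a j) (p j) volume).toReal :=
    Finset.prod_nonneg fun j _ => ENNReal.toReal_nonneg
  have h2 : c * ∏ j ∈ Finset.range (d + 3), (eLpNorm (EPC.FF d j₀ a j) (p j) volume).toReal
      ≤ |c| * (a * 2 ^ (d + 1)) := by
    calc c * ∏ j ∈ Finset.range (d + 3), (eLpNorm (EPC.FF d j₀ a j) (p j) volume).toReal
        ≤ |c| * ∏ j ∈ Finset.range (d + 3), (eLpNorm (EPC.FF d j₀ a j) (p j) volume).toReal :=
          mul_le_mul_of_nonneg_right (le_abs_self c) hprod_nonneg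
      _ ≤ |c| * (a * 2 ^ (d + 1)) :=
          mul_le_mul_of_nonneg_left
            (EPC.prod_eLpNorm_le d j₀ a hj₀ hj₀' ha p hpj₀ hp hsum) (abs_nonneg c)
  have h3 := EPC.Tre_lower d j₀ a hj₀ hj₀' ha ha8
  have hlog : |c| * 4 ^ (d + 1) + 1 ≤ Real.log (1 / (4 * a)) := by
    have h4a : 0 < 4 * a := by positivity
    have hle : 4 * a ≤ Real.exp (-(|c| * 4 ^ (d + 1) + 1)) := by
      have hmin : a ≤ (1/4) * Real.exp (-(|c| * 4 ^ (d + 1) + 1)) := min_le_right _ _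
      linarith
    have hll := Real.log_le_log h4a hle
    rw [Real.log_exp] at hll
    rw [one_div, Real.log_inv]
    linarith
  have hchain : a * ((1/2:ℝ) ^ (d + 1) * Real.log (1 / (4 * a))) ≤ |c| * (a * 2 ^ (d + 1)) :=
    le_trans h3 (le_trans (le_trans h1 hL) h2)
  have hP : (0:ℝ) < 2 ^ (d + 1) := by positivity
  have hκ : (1/2:ℝ) ^ (d + 1) = 1 / 2 ^ (d + 1) := by
    rw [div_pow, one_pow]
  have hPP : (4:ℝ) ^ (d + 1) = 2 ^ (d + 1) * 2 ^ (d + 1) := by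
    rw [show (4:ℝ) = 2 * 2 by norm_num, mul_pow]
  rw [hκ] at hchain
  set P : ℝ := 2 ^ (d + 1) with hPdef
  set L : ℝ := Real.log (1 / (4 * a)) with hLdef
  have h5 : a * L ≤ |c| * a * (P * P) := by
    have hmul := mul_le_mul_of_nonneg_left hchain hP.le
    calc a * L = P * (a * (1 / P * L)) := by field_simp
      _ ≤ P * (|c| * (a * P)) := hmul
      _ = |c| * a * (P * P) := by ring
  have h6 : a * (|c| * (P * P) + 1) ≤ a * L := by
    apply mul_le_mul_of_nonneg_left _ ha.le
    rw [← hPP]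
    exact hlog
  nlinarith [h5, h6, ha]
end

section
/- Let n ≥ 2 and let ξ = (ξ₁, …, ξ_n) ∈ ℝⁿ with ξ₁, …, ξ_{n-1} all nonzero. Then μ_n(ξ) = (c_n / (ξ₁ ⋯ ξ_{n-1})) ∑_{α ∈ {0,1}^{n-1}} (−1)^{|α|} g_n(ξ_n + ∑_{j=1}^{n-1} α_j ξ_j), where g_n(t) = |t| t^{n-2}, c_n = (−1)^{n+1}/(n−1)!, and |α| = α₁ + ⋯ + α_{n-1}. -/
open MeasureTheory

/-- Iterated "antiderivatives" of the sign function: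
`FF 0 = sign`, `FF (k+1) t = |t| * t^k / (k+1)!`. -/
noncomputable def FF : ℕ → ℝ → ℝ
  | 0 => Real.sign
  | (k + 1) => fun t => |t| * t ^ k / (Nat.factorial (k + 1))

lemma measurable_FF (k : ℕ) : Measurable (FF k) := by
  cases k with
  | zero =>
      show Measurable Real.sign
      unfold Real.sign
      exact Measurable.ite (measurableSet_lt measurable_id measurable_const)
        measurable_const <| Measurable.ite
          (measurableSet_lt measurable_const measurable_id)
          measurable_const measurable_const
  | succ k =>
      exact ((measurable_id.abs.mul (measurable_id.pow_const k)).div_const _)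

lemma continuous_FF_succ (k : ℕ) : Continuous (FF (k + 1)) := by
  show Continuous fun t : ℝ => |t| * t ^ k / (Nat.factorial (k + 1))
  fun_prop

lemma abs_FF_le (k : ℕ) {R t : ℝ} (ht : |t| ≤ R) : |FF k t| ≤ max 1 (R ^ k) := by
  cases k with
  | zero =>
      refine le_trans ?_ (le_max_left _ _)
      rcases Real.sign_apply_eq t with h | h | h <;> simp [FF, h]
  | succ k =>
      refine le_trans ?_ (le_max_right _ _)
      have h0 : (0:ℝ) ≤ R := le_trans (abs_nonneg t) ht
      have h1 : |FF (k+1) t| = |t| ^ (k+1) / (Nat.factorial (k+1)) := by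
        rw [show FF (k+1) t = |t| * t ^ k / (Nat.factorial (k + 1)) from rfl]
        rw [abs_div, abs_mul, abs_abs, abs_pow, pow_succ, mul_comm]
        simp [abs_of_nonneg (Nat.cast_nonneg (Nat.factorial (k+1)) : (0:ℝ) ≤ _)]
      rw [h1]
      calc |t| ^ (k+1) / (Nat.factorial (k+1)) ≤ |t| ^ (k+1) / 1 := by
            apply div_le_div_of_nonneg_left (pow_nonneg (abs_nonneg t) _) one_pos ?_ |>.trans_eq rfl
            exact_mod_cast Nat.one_le_iff_ne_zero.mpr (Nat.factorial_ne_zero _)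
        _ = |t| ^ (k+1) := by ring
        _ ≤ R ^ (k+1) := pow_le_pow_left₀ (abs_nonneg t) ht _

/-- derivative of `|t| * t^(k+1)`. -/
lemma hasDerivAt_abs_mul_pow (k : ℕ) (x : ℝ) :
    HasDerivAt (fun t : ℝ => |t| * t ^ (k + 1)) ((k + 2) * (|x| * x ^ k)) x := by
  rcases lt_trichotomy x 0 with hx | hx | hx
  · have hev : (fun t : ℝ => -t ^ (k + 2)) =ᶠ[nhds x] fun t : ℝ => |t| * t ^ (k + 1) := by
      filter_upwards [eventually_lt_nhds hx] with t ht
      rw [abs_of_neg ht]; ring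
    have h1 : HasDerivAt (fun t : ℝ => -t ^ (k + 2)) (-((k + 2) * x ^ (k + 1))) x := by
      simpa using (hasDerivAt_pow (k + 2) x).fun_neg
    have := h1.congr_of_eventuallyEq hev.symm
    refine this.congr_deriv ?_
    rw [abs_of_neg hx]; push_cast; ring
  · subst hx
    have h0 : ((k:ℝ) + 2) * (|(0:ℝ)| * 0 ^ k) = 0 := by simp
    rw [h0]
    rw [hasDerivAt_iff_tendsto_slope]
    have : ∀ t : ℝ, t ≠ 0 → slope (fun t : ℝ => |t| * t ^ (k + 1)) 0 t = |t| * t ^ k := by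
      intro t ht
      rw [slope_def_field]
      field_simp [ht]
      ring
    have hcont : Filter.Tendsto (fun t : ℝ => |t| * t ^ k) (nhds 0) (nhds 0) := by
      have : Continuous fun t : ℝ => |t| * t ^ k := by fun_prop
      simpa using this.tendsto 0
    refine Filter.Tendsto.congr' ?_ (hcont.mono_left nhdsWithin_le_nhds)
    filter_upwards [self_mem_nhdsWithin] with t ht
    exact (this t ht).symm
  · have hev : (fun t : ℝ => t ^ (k + 2)) =ᶠ[nhds x] fun t : ℝ => |t| * t ^ (k + 1) := by
      filter_upwards [eventually_gt_nhds hx] with t ht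
      rw [abs_of_pos ht]; ring
    have h1 : HasDerivAt (fun t : ℝ => t ^ (k + 2)) ((k + 2) * x ^ (k + 1)) x := by
      simpa using hasDerivAt_pow (k + 2) x
    have := h1.congr_of_eventuallyEq hev.symm
    refine this.congr_deriv ?_
    rw [abs_of_pos hx]; push_cast; ring

lemma hasDerivAt_FF (k : ℕ) (x : ℝ) : HasDerivAt (FF (k + 2)) (FF (k + 1) x) x := by
  have h := (hasDerivAt_abs_mul_pow k x).div_const (Nat.factorial (k + 2))
  have heq : (fun t : ℝ => |t| * t ^ (k + 1) / (Nat.factorial (k + 2))) = FF (k + 2) := rfl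
  rw [heq] at h
  refine h.congr_deriv (Eq.symm ?_)
  show |x| * x ^ k / (Nat.factorial (k + 1)) = _
  rw [Nat.factorial_succ (k + 1)]
  have h1 : ((k:ℝ) + 1 + 1) ≠ 0 := by positivity
  have h2 : ((Nat.factorial (k + 1) : ℝ)) ≠ 0 := by
    exact_mod_cast Nat.factorial_ne_zero (k + 1)
  push_cast
  field_simp
  ring

lemma intervalIntegrable_sign (a b : ℝ) :
    IntervalIntegrable Real.sign volume a b := by
  apply IntervalIntegrable.mono_fun' (g := fun _ : ℝ => (1:ℝ))
  · exact intervalIntegrable_const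
  · exact (measurable_FF 0).aestronglyMeasurable
  · filter_upwards with t
    rcases Real.sign_apply_eq t with h | h | h <;> simp [h]

lemma integral_sign_zero (b : ℝ) : ∫ t in (0:ℝ)..b, Real.sign t = |b| := by
  rcases le_or_gt 0 b with hb | hb
  · rw [intervalIntegral.integral_of_le hb]
    rw [show ∫ t in Set.Ioc (0:ℝ) b, Real.sign t = ∫ t in Set.Ioc (0:ℝ) b, (1:ℝ) from
      setIntegral_congr_fun measurableSet_Ioc fun t ht => Real.sign_of_pos ht.1]
    simp [Real.volume_Ioc, ENNReal.toReal_ofReal hb, abs_of_nonneg hb, hb]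
  · rw [intervalIntegral.integral_symm b 0, intervalIntegral.integral_of_le hb.le,
      integral_Ioc_eq_integral_Ioo]
    rw [show ∫ t in Set.Ioo b (0:ℝ), Real.sign t = ∫ t in Set.Ioo b (0:ℝ), (-1:ℝ) from
      setIntegral_congr_fun measurableSet_Ioo fun t ht => Real.sign_of_neg ht.2]
    rw [abs_of_neg hb]
    simp [Real.volume_Ioo, ENNReal.toReal_ofReal (by linarith : (0:ℝ) ≤ 0 - b)]
    linarith

lemma integral_sign_eq (a b : ℝ) : ∫ t in a..b, Real.sign t = |b| - |a| := by
  have h := intervalIntegral.integral_add_adjacent_intervals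
    (intervalIntegrable_sign a 0) (intervalIntegrable_sign 0 b)
  rw [← h, integral_sign_zero b, intervalIntegral.integral_symm, integral_sign_zero a]
  ring

lemma FF_ftc (k : ℕ) (a b : ℝ) : ∫ t in a..b, FF k t = FF (k + 1) b - FF (k + 1) a := by
  cases k with
  | zero =>
      have h1 : ∀ t : ℝ, FF 1 t = |t| := by
        intro t; show |t| * t ^ 0 / (Nat.factorial 1) = |t|; simp
      rw [h1, h1]
      exact integral_sign_eq a b
  | succ k =>
      exact intervalIntegral.integral_eq_sub_of_hasDerivAt
        (fun x _ => hasDerivAt_FF k x)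
        ((continuous_FF_succ k).intervalIntegrable a b)

lemma FF_step {a : ℝ} (ha : a ≠ 0) (k : ℕ) (c : ℝ) :
    ∫ x in Set.Icc (0:ℝ) 1, FF k (x * a + c) =
      a⁻¹ * (FF (k + 1) (c + a) - FF (k + 1) c) := by
  rw [integral_Icc_eq_integral_Ioc, ← intervalIntegral.integral_of_le (zero_le_one)]
  have h1 : (fun x : ℝ => FF k (x * a + c)) = fun x : ℝ => FF k (a * x + c) := by
    funext x; rw [mul_comm]
  calc ∫ x in (0:ℝ)..1, FF k (x * a + c)
      = ∫ x in (0:ℝ)..1, FF k (a * x + c) := by rw [h1]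
    _ = a⁻¹ • ∫ x in a * 0 + c..a * 1 + c, FF k x :=
        intervalIntegral.integral_comp_mul_add (FF k) ha c
    _ = a⁻¹ * (FF (k + 1) (c + a) - FF (k + 1) c) := by
        rw [smul_eq_mul, show a * 0 + c = c by ring, show a * 1 + c = c + a by ring,
          FF_ftc]

lemma integrableOn_FF_affine (k : ℕ) (a c : ℝ) :
    IntegrableOn (fun x : ℝ => FF k (x * a + c)) (Set.Icc (0:ℝ) 1) := by
  have hmeas : Measurable fun x : ℝ => FF k (x * a + c) :=
    (measurable_FF k).comp (by fun_prop)
  refine Integrable.mono' (g := fun _ => max 1 ((|a| + |c|) ^ k))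
    (integrableOn_const ?_) hmeas.aestronglyMeasurable.restrict ?_
  · simp [Real.volume_Icc]
  · refine (ae_restrict_iff' measurableSet_Icc).2 (Filter.Eventually.of_forall ?_)
    intro x hx
    apply abs_FF_le
    calc |x * a + c| ≤ |x * a| + |c| := abs_add_le _ _
      _ ≤ |a| + |c| := by
          have : |x * a| = |x| * |a| := abs_mul x a
          have hx1 : |x| ≤ 1 := by
            rw [abs_le]; exact ⟨by linarith [hx.1], hx.2⟩
          nlinarith [abs_nonneg a, abs_nonneg (x*a)]

lemma integrableOn_FF_pi (k m : ℕ) (w : Fin m → ℝ) (c : ℝ) :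
    IntegrableOn (fun y : Fin m → ℝ => FF k (∑ j, y j * w j + c))
      (Set.univ.pi fun _ : Fin m => Set.Icc (0:ℝ) 1) := by
  have hmeas : Measurable fun y : Fin m → ℝ => FF k (∑ j, y j * w j + c) :=
    (measurable_FF k).comp (by fun_prop)
  have hvol : volume (Set.univ.pi fun _ : Fin m => Set.Icc (0:ℝ) 1) = 1 := by
    rw [volume_pi_pi]; simp [Real.volume_Icc]
  refine Integrable.mono' (g := fun _ => max 1 ((∑ j, |w j| + |c|) ^ k))
    (integrableOn_const (by rw [hvol]; exact ENNReal.one_ne_top))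
    hmeas.aestronglyMeasurable.restrict ?_
  refine (ae_restrict_iff' (MeasurableSet.univ_pi fun _ => measurableSet_Icc)).2
    (Filter.Eventually.of_forall ?_)
  intro y hy
  apply abs_FF_le
  calc |∑ j, y j * w j + c| ≤ |∑ j, y j * w j| + |c| := abs_add_le _ _
    _ ≤ (∑ j, |y j * w j|) + |c| := by
        gcongr; exact Finset.abs_sum_le_sum_abs _ _
    _ ≤ (∑ j, |w j|) + |c| := by
        have hsum : (∑ j, |y j * w j|) ≤ ∑ j, |w j| := by
          apply Finset.sum_le_sum
          intro j _
          rw [abs_mul]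
          have hymem := hy j (Set.mem_univ j)
          have hy1 : |y j| ≤ 1 := by
            rw [abs_le]; exact ⟨by linarith [hymem.1], hymem.2⟩
          nlinarith [abs_nonneg (w j), abs_nonneg (y j)]
        linarith

lemma integrableOn_FF_prod (k m : ℕ) (a : ℝ) (w : Fin m → ℝ) (c : ℝ) :
    IntegrableOn (fun p : ℝ × (Fin m → ℝ) => FF k (∑ j, p.2 j * w j + (p.1 * a + c)))
      (Set.Icc (0:ℝ) 1 ×ˢ Set.univ.pi fun _ : Fin m => Set.Icc (0:ℝ) 1)
      ((volume : Measure ℝ).prod (volume : Measure (Fin m → ℝ))) := by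
  have hmeas : Measurable fun p : ℝ × (Fin m → ℝ) =>
      FF k (∑ j, p.2 j * w j + (p.1 * a + c)) :=
    (measurable_FF k).comp (by fun_prop)
  have hvol : ((volume : Measure ℝ).prod (volume : Measure (Fin m → ℝ)))
      (Set.Icc (0:ℝ) 1 ×ˢ Set.univ.pi fun _ : Fin m => Set.Icc (0:ℝ) 1) = 1 := by
    rw [Measure.prod_prod, show (volume : Measure (Fin m → ℝ))
        (Set.univ.pi fun _ => Set.Icc (0:ℝ) 1) = 1 by rw [volume_pi_pi]; simp [Real.volume_Icc]]
    simp [Real.volume_Icc]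
  refine Integrable.mono' (g := fun _ => max 1 (((∑ j, |w j|) + (|a| + |c|)) ^ k))
    (integrableOn_const (by rw [hvol]; exact ENNReal.one_ne_top))
    hmeas.aestronglyMeasurable.restrict ?_
  refine (ae_restrict_iff'
    (measurableSet_Icc.prod (MeasurableSet.univ_pi fun _ => measurableSet_Icc))).2
    (Filter.Eventually.of_forall ?_)
  rintro ⟨x, y⟩ ⟨hx, hy⟩
  apply abs_FF_le
  have h1 : |x * a| ≤ |a| := by
    rw [abs_mul]
    have hx1 : |x| ≤ 1 := by rw [abs_le]; exact ⟨by linarith [hx.1], hx.2⟩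
    nlinarith [abs_nonneg a, abs_nonneg x]
  have h2 : |∑ j, y j * w j| ≤ ∑ j, |w j| := by
    refine le_trans (Finset.abs_sum_le_sum_abs _ _) (Finset.sum_le_sum ?_)
    intro j _
    rw [abs_mul]
    have hymem := hy j (Set.mem_univ j)
    have hy1 : |y j| ≤ 1 := by rw [abs_le]; exact ⟨by linarith [hymem.1], hymem.2⟩
    nlinarith [abs_nonneg (w j), abs_nonneg (y j)]
  calc |∑ j, y j * w j + (x * a + c)| ≤ |∑ j, y j * w j| + (|x * a| + |c|) :=
        le_trans (abs_add_le _ _) (by gcongr; exact abs_add_le _ _)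
    _ ≤ (∑ j, |w j|) + (|a| + |c|) := by linarith


lemma FF_multi (m : ℕ) : ∀ (k : ℕ) (w : Fin m → ℝ), (∀ j, w j ≠ 0) → ∀ c : ℝ,
    (∫ y in Set.univ.pi fun _ : Fin m => Set.Icc (0:ℝ) 1, FF k (∑ j, y j * w j + c)) =
      (∏ j, w j)⁻¹ * ∑ α : Fin m → Bool,
        (-1:ℝ) ^ (∑ j, if α j then 0 else 1 : ℕ) *
          FF (k + m) (c + ∑ j, if α j then w j else 0) := by
  induction m with
  | zero =>
      intro k w hw c
      have hvol : volume (Set.univ.pi fun _ : Fin 0 => Set.Icc (0:ℝ) 1) = 1 := by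
        rw [volume_pi_pi]; simp
      rw [show (fun y : Fin 0 → ℝ => FF k (∑ j, y j * w j + c)) = fun _ => FF k c by
        funext y; simp]
      rw [setIntegral_const, measureReal_def, hvol]
      simp
  | succ m ih =>
      intro k w hw c
      have hmp := (measurePreserving_piFinSuccAbove
        (fun _ : Fin (m+1) => (volume : Measure ℝ)) 0).symm
      set e := MeasurableEquiv.piFinSuccAbove (fun _ : Fin (m+1) => ℝ) 0 with hedef
      have hsymm : ∀ p : ℝ × (Fin m → ℝ), e.symm p = Fin.cons p.1 p.2 := by
        intro p
        simp only [hedef, MeasurableEquiv.piFinSuccAbove_symm_apply, Fin.insertNthEquiv,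
          Fin.insertNth_zero, Equiv.coe_fn_mk, Fin.cons_zero, Fin.cons_succ]
        rfl
      have himg : e.symm '' (Set.Icc (0:ℝ) 1 ×ˢ Set.univ.pi fun _ : Fin m => Set.Icc (0:ℝ) 1) =
          Set.univ.pi fun _ : Fin (m+1) => Set.Icc (0:ℝ) 1 := by
        ext α
        constructor
        · rintro ⟨⟨x, y⟩, hxy, rfl⟩
          intro j _
          rw [hsymm]
          induction j using Fin.cases with
          | zero => simpa using hxy.1
          | succ i => simpa using hxy.2 i (Set.mem_univ i)
        · intro hα
          refine ⟨(α 0, fun j => α j.succ),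
            ⟨hα 0 (Set.mem_univ _), fun j _ => hα j.succ (Set.mem_univ _)⟩, ?_⟩
          rw [hsymm]
          exact Fin.cons_self_tail α
      have hint := hmp.setIntegral_image_emb e.symm.measurableEmbedding
        (fun α : Fin (m+1) → ℝ => FF k (∑ j, α j * w j + c))
        (Set.Icc (0:ℝ) 1 ×ˢ Set.univ.pi fun _ : Fin m => Set.Icc (0:ℝ) 1)
      rw [himg] at hint
      rw [show (Measure.pi fun _ : Fin (m+1) => (volume : Measure ℝ)) =
        (volume : Measure (Fin (m+1) → ℝ)) from rfl] at hint
      rw [hint]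
      have hfe : (fun p : ℝ × (Fin m → ℝ) => FF k (∑ j, (e.symm p) j * w j + c)) =
          fun p : ℝ × (Fin m → ℝ) =>
            FF k (∑ j, p.2 j * w j.succ + (p.1 * w 0 + c)) := by
        funext p
        congr 1
        rw [hsymm, Fin.sum_univ_succ]
        simp only [Fin.cons_zero, Fin.cons_succ]
        ring
      rw [hfe]
      rw [show ((volume : Measure ℝ).prod (Measure.pi fun _ : Fin m => (volume : Measure ℝ))) =
        ((volume : Measure ℝ).prod (volume : Measure (Fin m → ℝ))) from rfl]
      rw [setIntegral_prod _ (integrableOn_FF_prod k m (w 0) (fun j => w j.succ) c)]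
      have hinner : ∀ x : ℝ,
          (∫ y in Set.univ.pi fun _ : Fin m => Set.Icc (0:ℝ) 1,
            FF k (∑ j : Fin m, y j * w j.succ + (x * w 0 + c))) =
          (∏ j : Fin m, w j.succ)⁻¹ * ∑ α : Fin m → Bool,
            (-1:ℝ) ^ (∑ j : Fin m, if α j then 0 else 1 : ℕ) *
              FF (k + m) ((x * w 0 + c) + ∑ j : Fin m, if α j then w j.succ else 0) :=
        fun x => ih k (fun j => w j.succ) (fun j => hw j.succ) (x * w 0 + c)
      simp only [hinner]
      rw [integral_const_mul]
      have hintg : ∀ α : Fin m → Bool,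
          IntegrableOn (fun x : ℝ =>
            (-1:ℝ) ^ (∑ j : Fin m, if α j then 0 else 1 : ℕ) *
              FF (k + m) ((x * w 0 + c) + ∑ j : Fin m, if α j then w j.succ else 0))
            (Set.Icc (0:ℝ) 1) := by
        intro α
        have h := (integrableOn_FF_affine (k + m) (w 0)
          (c + ∑ j : Fin m, if α j then w j.succ else 0)).const_mul
          ((-1:ℝ) ^ (∑ j : Fin m, if α j then 0 else 1 : ℕ))
        simpa [add_assoc, IntegrableOn] using h
      rw [integral_finset_sum _ (fun α _ => hintg α)]
      have hterm : ∀ α : Fin m → Bool,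
          (∫ x in Set.Icc (0:ℝ) 1,
            (-1:ℝ) ^ (∑ j : Fin m, if α j then 0 else 1 : ℕ) *
              FF (k + m) ((x * w 0 + c) + ∑ j : Fin m, if α j then w j.succ else 0)) =
          (-1:ℝ) ^ (∑ j : Fin m, if α j then 0 else 1 : ℕ) *
            ((w 0)⁻¹ *
              (FF (k + m + 1) ((c + ∑ j : Fin m, if α j then w j.succ else 0) + w 0) -
               FF (k + m + 1) (c + ∑ j : Fin m, if α j then w j.succ else 0))) := by
        intro α
        rw [integral_const_mul]
        congr 1
        rw [show (fun x : ℝ =>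
              FF (k + m) ((x * w 0 + c) + ∑ j : Fin m, if α j then w j.succ else 0))
            = fun x : ℝ =>
              FF (k + m) (x * w 0 + (c + ∑ j : Fin m, if α j then w j.succ else 0)) by
          funext x; rw [add_assoc]]
        exact FF_step (hw 0) (k + m) _
      simp only [hterm]
      rw [show k + (m + 1) = k + m + 1 from rfl]
      rw [Fin.prod_univ_succ]
      rw [← Equiv.sum_comp (Fin.consEquiv fun _ : Fin (m+1) => Bool)]
      simp only [Fin.consEquiv_apply, Fintype.sum_prod_type, Fintype.sum_bool,
        Fin.sum_univ_succ, Fin.cons_zero, Fin.cons_succ, if_true, if_false, reduceIte, zero_add, Bool.false_eq_true]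
      rw [← Finset.sum_add_distrib, Finset.mul_sum, Finset.mul_sum]
      refine Finset.sum_congr rfl fun α _ => ?_
      have h0 := hw 0
      have hP : (∏ j : Fin m, w j.succ) ≠ 0 :=
        Finset.prod_ne_zero_iff.2 fun j _ => hw j.succ
      rw [show c + (w 0 + ∑ j : Fin m, if α j then w j.succ else 0)
          = (c + ∑ j : Fin m, if α j then w j.succ else 0) + w 0 by ring]
      field_simp
      ring

/-- The symbol `μ_n` in dimension `n = m + 1`:
`μ_n(ξ) = ∫_{[0,1]^{n-1}} sgn(α₁ξ₁ + ⋯ + α_{n-1}ξ_{n-1} + ξ_n) dα`. -/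
noncomputable def muSymbol (m : ℕ) (ξ : Fin (m + 1) → ℝ) : ℝ :=
  ∫ α in (Set.univ.pi fun _ : Fin m => Set.Icc (0:ℝ) 1),
    Real.sign ((∑ j : Fin m, α j * ξ j.castSucc) + ξ (Fin.last m))

/-- **Lemma (explicit formula for `μ_n`).** For `n = d + 2 ≥ 2` and `ξ ∈ ℝⁿ` with
`ξ₁,…,ξ_{n-1}` all nonzero:
`μ_n(ξ) = (c_n / (ξ₁⋯ξ_{n-1})) ∑_{α ∈ {0,1}^{n-1}} (-1)^{|α|} g_n(ξ_n + ∑_j α_j ξ_j)`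
where `g_n(t) = |t| t^{n-2}`, `c_n = (-1)^{n+1}/(n-1)!` and `|α| = α₁ + ⋯ + α_{n-1}`. -/
theorem mu_explicit_formula (d : ℕ) (ξ : Fin (d + 2) → ℝ)
    (hξ : ∀ j : Fin (d + 1), ξ j.castSucc ≠ 0) :
    muSymbol (d + 1) ξ =
      ((-1 : ℝ) ^ (d + 1) / (Nat.factorial (d + 1) : ℝ)) /
          (∏ j : Fin (d + 1), ξ j.castSucc) *
        ∑ α : Fin (d + 1) → Bool,
          (-1 : ℝ) ^ (∑ j : Fin (d + 1), if α j then 1 else 0 : ℕ) *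
            (|ξ (Fin.last (d + 1)) + ∑ j : Fin (d + 1), if α j then ξ j.castSucc else 0| *
              (ξ (Fin.last (d + 1)) +
                ∑ j : Fin (d + 1), if α j then ξ j.castSucc else 0) ^ d) := by
  have h := FF_multi (d + 1) 0 (fun j => ξ j.castSucc) hξ (ξ (Fin.last (d + 1)))
  rw [show muSymbol (d + 1) ξ =
      ∫ y in Set.univ.pi fun _ : Fin (d + 1) => Set.Icc (0:ℝ) 1,
        FF 0 (∑ j : Fin (d + 1), y j * ξ j.castSucc + ξ (Fin.last (d + 1))) from rfl]
  rw [h]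
  simp only [Nat.zero_add]
  have hFT : ∀ α : Fin (d + 1) → Bool,
      (∑ j : Fin (d + 1), if α j then 0 else 1 : ℕ) +
        (∑ j : Fin (d + 1), if α j then 1 else 0 : ℕ) = d + 1 := by
    intro α
    rw [← Finset.sum_add_distrib]
    have : ∀ j : Fin (d + 1),
        ((if α j then 0 else 1) + (if α j then 1 else 0) : ℕ) = 1 := by
      intro j; cases α j <;> simp
    simp [this]
  have hsign : ∀ α : Fin (d + 1) → Bool,
      ((-1:ℝ) ^ (∑ j : Fin (d + 1), if α j then 0 else 1 : ℕ)) =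
        (-1:ℝ) ^ (d + 1) * (-1:ℝ) ^ (∑ j : Fin (d + 1), if α j then 1 else 0 : ℕ) := by
    intro α
    have h2 : ((-1:ℝ)) ^ (∑ j : Fin (d + 1), if α j then 0 else 1 : ℕ) *
        (-1:ℝ) ^ (∑ j : Fin (d + 1), if α j then 1 else 0 : ℕ) = (-1:ℝ) ^ (d + 1) := by
      rw [← pow_add, hFT]
    have h3 : ((-1:ℝ)) ^ (∑ j : Fin (d + 1), if α j then 1 else 0 : ℕ) *
        (-1:ℝ) ^ (∑ j : Fin (d + 1), if α j then 1 else 0 : ℕ) = 1 := by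
      rw [← pow_add, ← two_mul, pow_mul]
      norm_num
    calc ((-1:ℝ)) ^ (∑ j : Fin (d + 1), if α j then 0 else 1 : ℕ)
        = ((-1:ℝ)) ^ (∑ j : Fin (d + 1), if α j then 0 else 1 : ℕ) *
          (((-1:ℝ)) ^ (∑ j : Fin (d + 1), if α j then 1 else 0 : ℕ) *
            (-1:ℝ) ^ (∑ j : Fin (d + 1), if α j then 1 else 0 : ℕ)) := by rw [h3, mul_one]
      _ = _ := by rw [← mul_assoc, h2]
  rw [Finset.mul_sum, Finset.mul_sum]
  refine Finset.sum_congr rfl fun α _ => ?_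
  rw [hsign α]
  have hfac : ((Nat.factorial (d + 1) : ℝ)) ≠ 0 := by
    exact_mod_cast Nat.factorial_ne_zero (d + 1)
  have hP : (∏ j : Fin (d + 1), ξ j.castSucc) ≠ 0 :=
    Finset.prod_ne_zero_iff.2 fun j _ => hξ j
  rw [show FF (d + 1) (ξ (Fin.last (d + 1)) +
        ∑ j : Fin (d + 1), if α j then ξ j.castSucc else 0) =
      |ξ (Fin.last (d + 1)) + ∑ j : Fin (d + 1), if α j then ξ j.castSucc else 0| *
        (ξ (Fin.last (d + 1)) + ∑ j : Fin (d + 1), if α j then ξ j.castSucc else 0) ^ d /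
          (Nat.factorial (d + 1)) from rfl]
  field_simp
end

section
/- Let n ≥ 2, let ψ be a smooth function supported in [−2, −1/2] ∪ [1/2, 2], and let φ be a smooth function supported in [−2^{−ℓ₀+1}, 2^{−ℓ₀+1}], where ℓ₀ is large enough that (n−1)·2^{−ℓ₀+1} < 1/2 (for example ℓ₀ ≥ 100 log n with n ≥ 2); write g_k(η) = g(2^{−k}η). Then the support of each summand μ_n(ξ) φ_k(ξ₁) ⋯ φ_k(ξ_{n-1}) ψ_k(ξ_n) is disjoint from every hyperplane {ξ ∈ ℝⁿ : α₁ξ₁ + ⋯ + α_{n-1}ξ_{n-1} + ξ_n = 0} with α ∈ {0,1}^{n-1}, and the function m(ξ) = ∑_{k ∈ ℤ} μ_n(ξ) φ_k(ξ₁) ⋯ φ_k(ξ_{n-1}) ψ_k(ξ_n) is a standard smooth symbol on ℝⁿ. -/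
open MeasureTheory

/-- A bounded function `m ∈ C^∞(ℝⁿ ∖ {0})` is a standard smooth symbol if all its
derivatives satisfy `|∂^α m(ξ)| ≤ c_α |ξ|^{-|α|}` away from the origin
(real-valued version). -/
def IsStandardSymbolR (n : ℕ) (m : (Fin n → ℝ) → ℝ) : Prop :=
  (∃ C : ℝ, ∀ ξ, |m ξ| ≤ C) ∧
  ContDiffOn ℝ (⊤ : ℕ∞) m {(0 : Fin n → ℝ)}ᶜ ∧
  ∀ k : ℕ, ∃ c : ℝ, 0 < c ∧ ∀ ξ : Fin n → ℝ, ξ ≠ 0 →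
    ‖iteratedFDerivWithin ℝ k m {(0 : Fin n → ℝ)}ᶜ ξ‖ ≤ c * ‖ξ‖ ^ (-(k : ℝ))


section Helpers

lemma real_sign_const_mul {c : ℝ} (hc : 0 < c) (x : ℝ) :
    Real.sign (c * x) = Real.sign x := by
  rcases lt_trichotomy x 0 with h | h | h
  · rw [Real.sign_of_neg h, Real.sign_of_neg (mul_neg_of_pos_of_neg hc h)]
  · simp [h]
  · rw [Real.sign_of_pos h, Real.sign_of_pos (mul_pos hc h)]

lemma sign_add_of_abs_lt {a b : ℝ} (h : |a| < |b|) :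
    a + b ≠ 0 ∧ Real.sign (a + b) = Real.sign b := by
  rcases lt_trichotomy b 0 with hb | hb | hb
  · have : a + b < 0 := by
      have := abs_lt.1 h
      rw [abs_of_neg hb] at this
      linarith [this.2]
    exact ⟨ne_of_lt this, by rw [Real.sign_of_neg this, Real.sign_of_neg hb]⟩
  · exfalso; rw [hb, abs_zero] at h; exact absurd h (abs_nonneg a).not_gt
  · have : 0 < a + b := by
      have := abs_lt.1 h
      rw [abs_of_pos hb] at this
      linarith [this.1]
    exact ⟨(ne_of_gt this), by rw [Real.sign_of_pos this, Real.sign_of_pos hb]⟩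

end Helpers

section Supp

variable {d ℓ₀ : ℕ} {ψ φ : ℝ → ℝ}

lemma two_zpow_pos (k : ℤ) : (0:ℝ) < 2 ^ k := zpow_pos (by norm_num) k

lemma support_bounds
    (hψsupp : tsupport ψ ⊆ Set.Icc (-2 : ℝ) (-(1/2)) ∪ Set.Icc (1/2 : ℝ) 2)
    (hφsupp : tsupport φ ⊆
      Set.Icc (-(2:ℝ) ^ (-(ℓ₀ : ℤ) + 1)) ((2:ℝ) ^ (-(ℓ₀ : ℤ) + 1)))
    {k : ℤ} {ξ : Fin (d + 2) → ℝ}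
    (hφne : ∀ j : Fin (d + 1), φ ((2:ℝ) ^ (-k) * ξ j.castSucc) ≠ 0)
    (hψne : ψ ((2:ℝ) ^ (-k) * ξ (Fin.last (d + 1))) ≠ 0) :
    (∀ j : Fin (d + 1), |ξ j.castSucc| ≤ (2:ℝ) ^ (k - ℓ₀ + 1)) ∧
    (2:ℝ) ^ (k - 1) ≤ |ξ (Fin.last (d + 1))| ∧
    |ξ (Fin.last (d + 1))| ≤ (2:ℝ) ^ (k + 1) := by
  have hp : (0:ℝ) < 2 ^ k := two_zpow_pos k
  have hcdiv : ∀ x : ℝ, (2:ℝ) ^ (-k) * x = x / 2 ^ k := by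
    intro x
    rw [zpow_neg, inv_mul_eq_div]
  refine ⟨fun j => ?_, ?_, ?_⟩
  · have hmem := hφsupp (subset_tsupport φ (hφne j))
    have habs : |(2:ℝ) ^ (-k) * ξ j.castSucc| ≤ (2:ℝ) ^ (-(ℓ₀ : ℤ) + 1) :=
      abs_le.2 ⟨hmem.1, hmem.2⟩
    rw [hcdiv, abs_div, abs_of_pos hp, div_le_iff₀ hp] at habs
    calc |ξ j.castSucc| ≤ (2:ℝ) ^ (-(ℓ₀ : ℤ) + 1) * 2 ^ k := habs
      _ = (2:ℝ) ^ (k - ℓ₀ + 1) := by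
          rw [← zpow_add₀ (by norm_num : (2:ℝ) ≠ 0)]
          congr 1
          ring
  · have hmem := hψsupp (subset_tsupport ψ hψne)
    have habs : (1/2 : ℝ) ≤ |(2:ℝ) ^ (-k) * ξ (Fin.last (d + 1))| := by
      rcases hmem with h | h
      · rw [abs_of_nonpos (by linarith [h.2] : (2:ℝ) ^ (-k) * ξ (Fin.last (d+1)) ≤ 0)]
        linarith [h.2]
      · rw [abs_of_nonneg (by linarith [h.1] : (0:ℝ) ≤ (2:ℝ) ^ (-k) * ξ (Fin.last (d+1)))]
        linarith [h.1]
    rw [hcdiv, abs_div, abs_of_pos hp, le_div_iff₀ hp] at habs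
    calc (2:ℝ) ^ (k - 1) = 2 ^ k / 2 := by
          rw [zpow_sub₀ (by norm_num : (2:ℝ) ≠ 0)]; norm_num
      _ ≤ |ξ (Fin.last (d + 1))| := by linarith
  · have hmem := hψsupp (subset_tsupport ψ hψne)
    have habs : |(2:ℝ) ^ (-k) * ξ (Fin.last (d + 1))| ≤ 2 := by
      rcases hmem with h | h
      · rw [abs_of_nonpos (by linarith [h.2] : (2:ℝ) ^ (-k) * ξ (Fin.last (d+1)) ≤ 0)]
        linarith [h.1]
      · rw [abs_of_nonneg (by linarith [h.1] : (0:ℝ) ≤ (2:ℝ) ^ (-k) * ξ (Fin.last (d+1)))]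
        exact h.2
    rw [hcdiv, abs_div, abs_of_pos hp, div_le_iff₀ hp] at habs
    calc |ξ (Fin.last (d + 1))| ≤ 2 * 2 ^ k := habs
      _ = (2:ℝ) ^ (k + 1) := by
          rw [zpow_add₀ (by norm_num : (2:ℝ) ≠ 0)]; norm_num; ring

end Supp


section Sign

variable {d ℓ₀ : ℕ}

lemma sum_sign (hℓ₀ : ((d : ℝ) + 1) * (2:ℝ) ^ (-(ℓ₀ : ℤ) + 1) < 1/2)
    {k : ℤ} {ξ : Fin (d + 2) → ℝ}
    (hb1 : ∀ j : Fin (d + 1), |ξ j.castSucc| ≤ (2:ℝ) ^ (k - ℓ₀ + 1))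
    (hb2 : (2:ℝ) ^ (k - 1) ≤ |ξ (Fin.last (d + 1))|)
    {α : Fin (d + 1) → ℝ} (hα : ∀ j, 0 ≤ α j ∧ α j ≤ 1) :
    (∑ j : Fin (d + 1), α j * ξ j.castSucc) + ξ (Fin.last (d + 1)) ≠ 0 ∧
    Real.sign ((∑ j : Fin (d + 1), α j * ξ j.castSucc) + ξ (Fin.last (d + 1))) =
      Real.sign (ξ (Fin.last (d + 1))) := by
  have hp : (0:ℝ) < 2 ^ k := two_zpow_pos k
  have hbound : |∑ j : Fin (d + 1), α j * ξ j.castSucc| < |ξ (Fin.last (d + 1))| := by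
    have h1 : |∑ j : Fin (d + 1), α j * ξ j.castSucc| ≤
        ((d : ℝ) + 1) * (2:ℝ) ^ (k - ℓ₀ + 1) := by
      calc |∑ j : Fin (d + 1), α j * ξ j.castSucc|
          ≤ ∑ j : Fin (d + 1), |α j * ξ j.castSucc| := Finset.abs_sum_le_sum_abs _ _
        _ ≤ ∑ _j : Fin (d + 1), (2:ℝ) ^ (k - ℓ₀ + 1) := by
            refine Finset.sum_le_sum fun j _ => ?_
            rw [abs_mul]
            calc |α j| * |ξ j.castSucc| ≤ 1 * (2:ℝ) ^ (k - ℓ₀ + 1) := by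
                  refine mul_le_mul ?_ (hb1 j) (abs_nonneg _) zero_le_one
                  rw [abs_of_nonneg (hα j).1]; exact (hα j).2
              _ = (2:ℝ) ^ (k - ℓ₀ + 1) := one_mul _
        _ = ((d : ℝ) + 1) * (2:ℝ) ^ (k - ℓ₀ + 1) := by
            rw [Finset.sum_const, Finset.card_univ, Fintype.card_fin, nsmul_eq_mul]
            push_cast; ring
    have h2 : ((d : ℝ) + 1) * (2:ℝ) ^ (k - ℓ₀ + 1) < (2:ℝ) ^ (k - 1) := by
      have e1 : (2:ℝ) ^ (k - ℓ₀ + 1) = (2:ℝ) ^ (-(ℓ₀:ℤ) + 1) * 2 ^ k := by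
        rw [← zpow_add₀ (by norm_num : (2:ℝ) ≠ 0)]; congr 1; ring
      have e2 : (2:ℝ) ^ (k - 1) = (1/2 : ℝ) * 2 ^ k := by
        rw [zpow_sub₀ (by norm_num : (2:ℝ) ≠ 0)]; norm_num; ring
      rw [e1, e2, ← mul_assoc]
      exact mul_lt_mul_of_pos_right hℓ₀ hp
    exact lt_of_le_of_lt h1 (lt_of_lt_of_le h2 hb2)
  exact sign_add_of_abs_lt hbound

lemma mu_eq_sign (hℓ₀ : ((d : ℝ) + 1) * (2:ℝ) ^ (-(ℓ₀ : ℤ) + 1) < 1/2)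
    {k : ℤ} {ξ : Fin (d + 2) → ℝ}
    (hb1 : ∀ j : Fin (d + 1), |ξ j.castSucc| ≤ (2:ℝ) ^ (k - ℓ₀ + 1))
    (hb2 : (2:ℝ) ^ (k - 1) ≤ |ξ (Fin.last (d + 1))|) :
    muSymbol (d + 1) ξ = Real.sign (ξ (Fin.last (d + 1))) := by
  unfold muSymbol
  rw [setIntegral_congr_fun (MeasurableSet.univ_pi fun _ => measurableSet_Icc)
    (fun α hα => (sum_sign hℓ₀ hb1 hb2 (fun j => by
      have := hα j (Set.mem_univ j); exact ⟨this.1, this.2⟩)).2)]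
  rw [setIntegral_const]
  have : volume (Set.univ.pi fun _ : Fin (d + 1) => Set.Icc (0:ℝ) 1) = 1 := by
    rw [volume_pi_pi]
    simp [Real.volume_Icc]
  rw [measureReal_def, this]
  simp

end Sign

section Ftilde

variable {d ℓ₀ : ℕ} {ψ φ : ℝ → ℝ}

noncomputable def psit (ψ : ℝ → ℝ) (t : ℝ) : ℝ := Real.sign t * ψ t

lemma psi_zero_near (hψsupp : tsupport ψ ⊆ Set.Icc (-2 : ℝ) (-(1/2)) ∪ Set.Icc (1/2 : ℝ) 2)
    {t : ℝ} (ht : |t| < 1/2) : ψ t = 0 := by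
  by_contra h
  have := hψsupp (subset_tsupport ψ h)
  rcases this with h' | h'
  · rw [abs_lt] at ht; linarith [h'.2, ht.1]
  · rw [abs_lt] at ht; linarith [h'.1, ht.2]

lemma contDiff_psit (hψ : ContDiff ℝ (⊤ : ℕ∞) ψ)
    (hψsupp : tsupport ψ ⊆ Set.Icc (-2 : ℝ) (-(1/2)) ∪ Set.Icc (1/2 : ℝ) 2) :
    ContDiff ℝ (⊤ : ℕ∞) (psit ψ) := by
  rw [contDiff_iff_contDiffAt]
  intro x
  rcases lt_trichotomy x 0 with hx | hx | hx
  · refine ContDiffAt.congr_of_eventuallyEq (hψ.neg).contDiffAt ?_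
    filter_upwards [Iio_mem_nhds hx] with t ht
    simp only [psit, Real.sign_of_neg ht]
    ring
  · subst hx
    refine ContDiffAt.congr_of_eventuallyEq (contDiffAt_const (c := (0:ℝ))) ?_
    filter_upwards [Metric.ball_mem_nhds (0:ℝ) (by norm_num : (0:ℝ) < 1/2)] with t ht
    have : |t| < 1/2 := by simpa [Real.dist_eq] using ht
    have h0 : ψ t = 0 := psi_zero_near hψsupp this
    simp [psit, h0]
  · refine ContDiffAt.congr_of_eventuallyEq hψ.contDiffAt ?_
    filter_upwards [Ioi_mem_nhds hx] with t ht
    simp [psit, Real.sign_of_pos ht]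

noncomputable def Fk (ψ φ : ℝ → ℝ) (d : ℕ) (k : ℤ) (ξ : Fin (d + 2) → ℝ) : ℝ :=
  (∏ j : Fin (d + 1), φ ((2:ℝ) ^ (-k) * ξ j.castSucc)) *
    psit ψ ((2:ℝ) ^ (-k) * ξ (Fin.last (d + 1)))

lemma contDiff_Fk (hψ : ContDiff ℝ (⊤ : ℕ∞) ψ)
    (hψsupp : tsupport ψ ⊆ Set.Icc (-2 : ℝ) (-(1/2)) ∪ Set.Icc (1/2 : ℝ) 2)
    (hφ : ContDiff ℝ (⊤ : ℕ∞) φ) (k : ℤ) :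
    ContDiff ℝ (⊤ : ℕ∞) (Fk ψ φ d k) := by
  have hcoord : ∀ i : Fin (d + 2), ContDiff ℝ (⊤ : ℕ∞)
      (fun ξ : Fin (d + 2) → ℝ => (2:ℝ) ^ (-k) * ξ i) := by
    intro i
    exact contDiff_const.mul ((ContinuousLinearMap.proj i :
      (Fin (d + 2) → ℝ) →L[ℝ] ℝ).contDiff)
  refine ContDiff.mul ?_ ?_
  · exact contDiff_prod fun j _ => hφ.comp (hcoord j.castSucc)
  · exact (contDiff_psit hψ hψsupp).comp (hcoord (Fin.last (d + 1)))

lemma summand_eq_Fk (hℓ₀ : ((d : ℝ) + 1) * (2:ℝ) ^ (-(ℓ₀ : ℤ) + 1) < 1/2)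
    (hψsupp : tsupport ψ ⊆ Set.Icc (-2 : ℝ) (-(1/2)) ∪ Set.Icc (1/2 : ℝ) 2)
    (hφsupp : tsupport φ ⊆
      Set.Icc (-(2:ℝ) ^ (-(ℓ₀ : ℤ) + 1)) ((2:ℝ) ^ (-(ℓ₀ : ℤ) + 1)))
    (k : ℤ) (ξ : Fin (d + 2) → ℝ) :
    muSymbol (d + 1) ξ * (∏ j : Fin (d + 1), φ ((2:ℝ) ^ (-k) * ξ j.castSucc)) *
      ψ ((2:ℝ) ^ (-k) * ξ (Fin.last (d + 1))) = Fk ψ φ d k ξ := by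
  by_cases hψne : ψ ((2:ℝ) ^ (-k) * ξ (Fin.last (d + 1))) = 0
  · simp only [Fk, psit, hψne, mul_zero]
  by_cases hφne : (∏ j : Fin (d + 1), φ ((2:ℝ) ^ (-k) * ξ j.castSucc)) = 0
  · simp only [Fk, hφne, mul_zero, zero_mul]
  have hφne' : ∀ j : Fin (d + 1), φ ((2:ℝ) ^ (-k) * ξ j.castSucc) ≠ 0 := by
    intro j hj
    exact hφne (Finset.prod_eq_zero (Finset.mem_univ j) hj)
  obtain ⟨hb1, hb2, _⟩ := support_bounds hψsupp hφsupp hφne' hψne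
  rw [mu_eq_sign hℓ₀ hb1 hb2]
  have : Real.sign (ξ (Fin.last (d + 1))) =
      Real.sign ((2:ℝ) ^ (-k) * ξ (Fin.last (d + 1))) :=
    (real_sign_const_mul (two_zpow_pos (-k)) _).symm
  rw [this, Fk, psit]
  ring

end Ftilde

section Norms

variable {d ℓ₀ : ℕ} {ψ φ : ℝ → ℝ}

lemma Fk_factors_ne_zero {k : ℤ} {ξ : Fin (d + 2) → ℝ} (h : Fk ψ φ d k ξ ≠ 0) :
    (∀ j : Fin (d + 1), φ ((2:ℝ) ^ (-k) * ξ j.castSucc) ≠ 0) ∧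
    ψ ((2:ℝ) ^ (-k) * ξ (Fin.last (d + 1))) ≠ 0 := by
  rw [Fk] at h
  have h1 := left_ne_zero_of_mul h
  have h2 := right_ne_zero_of_mul h
  refine ⟨fun j hj => h1 (Finset.prod_eq_zero (Finset.mem_univ j) hj), fun hj => h2 ?_⟩
  rw [psit, hj, mul_zero]

lemma Fk_ne_zero_bounds
    (hψsupp : tsupport ψ ⊆ Set.Icc (-2 : ℝ) (-(1/2)) ∪ Set.Icc (1/2 : ℝ) 2)
    (hφsupp : tsupport φ ⊆
      Set.Icc (-(2:ℝ) ^ (-(ℓ₀ : ℤ) + 1)) ((2:ℝ) ^ (-(ℓ₀ : ℤ) + 1)))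
    {k : ℤ} {ξ : Fin (d + 2) → ℝ} (h : Fk ψ φ d k ξ ≠ 0) :
    (2:ℝ) ^ (k - 1) ≤ ‖ξ‖ ∧ ‖ξ‖ ≤ (2:ℝ) ^ (k + 1) := by
  obtain ⟨hφne, hψne⟩ := Fk_factors_ne_zero h
  obtain ⟨hb1, hb2, hb3⟩ := support_bounds hψsupp hφsupp hφne hψne
  constructor
  · calc (2:ℝ) ^ (k - 1) ≤ |ξ (Fin.last (d + 1))| := hb2
      _ = ‖ξ (Fin.last (d + 1))‖ := (Real.norm_eq_abs _).symm
      _ ≤ ‖ξ‖ := norm_le_pi_norm ξ (Fin.last (d + 1))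
  · refine (pi_norm_le_iff_of_nonneg (two_zpow_pos (k + 1)).le).2 fun i => ?_
    rw [Real.norm_eq_abs]
    refine Fin.lastCases ?_ (fun j => ?_) i
    · exact hb3
    · refine le_trans (hb1 j) ?_
      exact (zpow_le_zpow_iff_right₀ (by norm_num : (1:ℝ) < 2)).2 (by omega)

lemma two_zpow_le_two_zpow {a b : ℤ} (h2 : (2:ℝ) ^ a ≤ (2:ℝ) ^ b) : a ≤ b :=
  (zpow_le_zpow_iff_right₀ (by norm_num : (1:ℝ) < 2)).1 h2

lemma two_zpow_lt_two_zpow {a b : ℤ} (h2 : (2:ℝ) ^ a < (2:ℝ) ^ b) : a < b :=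
  (zpow_lt_zpow_iff_right₀ (by norm_num : (1:ℝ) < 2)).1 h2

lemma log2_le {r : ℝ} (hr : 0 < r) {k : ℤ} (h : (2:ℝ) ^ k ≤ r) : k ≤ Int.log 2 r := by
  have h1 : r < (2:ℝ) ^ (Int.log 2 r + 1) := by
    have := Int.lt_zpow_succ_log_self (by norm_num : 1 < 2) r
    simpa using this
  have := two_zpow_lt_two_zpow (lt_of_le_of_lt h h1)
  omega

lemma le_log2 {r : ℝ} (hr : 0 < r) {k : ℤ} (h : r ≤ (2:ℝ) ^ k) : Int.log 2 r ≤ k := by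
  have h1 : (2:ℝ) ^ (Int.log 2 r) ≤ r := by
    have := Int.zpow_log_le_self (by norm_num : 1 < 2) hr
    simpa using this
  exact two_zpow_le_two_zpow (le_trans h1 h)

lemma Fk_loc
    (hψsupp : tsupport ψ ⊆ Set.Icc (-2 : ℝ) (-(1/2)) ∪ Set.Icc (1/2 : ℝ) 2)
    (hφsupp : tsupport φ ⊆
      Set.Icc (-(2:ℝ) ^ (-(ℓ₀ : ℤ) + 1)) ((2:ℝ) ^ (-(ℓ₀ : ℤ) + 1)))
    {ξ : Fin (d + 2) → ℝ} {r R : ℝ} (h0 : 0 < r)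
    (hr : r ≤ ‖ξ‖) (hR : ‖ξ‖ ≤ R) {k : ℤ} (h : Fk ψ φ d k ξ ≠ 0) :
    k ∈ Finset.Icc (Int.log 2 r - 1) (Int.log 2 R + 1) := by
  obtain ⟨h1, h2⟩ := Fk_ne_zero_bounds hψsupp hφsupp h
  rw [Finset.mem_Icc]
  constructor
  · have := le_log2 h0 (le_trans hr h2)
    omega
  · have := log2_le (lt_of_lt_of_le h0 (le_trans hr hR)) (le_trans h1 (le_trans hR (le_refl R)))
    omega

lemma Fk_smul (j k : ℤ) (ξ : Fin (d + 2) → ℝ) :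
    Fk ψ φ d k ((2:ℝ) ^ j • ξ) = Fk ψ φ d (k - j) ξ := by
  have harg : ∀ i : Fin (d + 2),
      (2:ℝ) ^ (-k) * ((2:ℝ) ^ j • ξ) i = (2:ℝ) ^ (-(k - j)) * ξ i := by
    intro i
    rw [Pi.smul_apply, smul_eq_mul, ← mul_assoc,
      ← zpow_add₀ (by norm_num : (2:ℝ) ≠ 0)]
    congr 2
    ring
  simp only [Fk, harg]

end Norms


section Main

variable {d ℓ₀ : ℕ} {ψ φ : ℝ → ℝ}

lemma abs_sign_le (t : ℝ) : |Real.sign t| ≤ 1 := by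
  rcases Real.sign_apply_eq t with h | h | h <;> rw [h] <;> norm_num

lemma abs_psit_le (ψ : ℝ → ℝ) (t : ℝ) : |psit ψ t| ≤ |ψ t| := by
  rw [psit, abs_mul]
  exact mul_le_of_le_one_left (abs_nonneg _) (abs_sign_le t)

lemma mF_smul
    (j : ℤ) (ξ : Fin (d + 2) → ℝ) :
    ∑' k : ℤ, Fk ψ φ d k ((2:ℝ) ^ j • ξ) = ∑' k : ℤ, Fk ψ φ d k ξ := by
  calc ∑' k : ℤ, Fk ψ φ d k ((2:ℝ) ^ j • ξ)
      = ∑' k : ℤ, Fk ψ φ d (k - j) ξ := tsum_congr fun k => Fk_smul j k ξ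
    _ = ∑' k : ℤ, Fk ψ φ d k ξ := (Equiv.subRight j).tsum_eq fun k => Fk ψ φ d k ξ

theorem smooth_psi_phi_case_aux
    (hℓ₀ : ((d : ℝ) + 1) * (2:ℝ) ^ (-(ℓ₀ : ℤ) + 1) < 1/2)
    (hψ : ContDiff ℝ (⊤ : ℕ∞) ψ)
    (hψsupp : tsupport ψ ⊆ Set.Icc (-2 : ℝ) (-(1/2)) ∪ Set.Icc (1/2 : ℝ) 2)
    (hφ : ContDiff ℝ (⊤ : ℕ∞) φ)
    (hφsupp : tsupport φ ⊆
      Set.Icc (-(2:ℝ) ^ (-(ℓ₀ : ℤ) + 1)) ((2:ℝ) ^ (-(ℓ₀ : ℤ) + 1))) :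
    (∀ k : ℤ, ∀ ξ ∈ Function.support (fun ξ : Fin (d + 2) → ℝ =>
        muSymbol (d + 1) ξ * (∏ j : Fin (d + 1), φ ((2:ℝ) ^ (-k) * ξ j.castSucc)) *
          ψ ((2:ℝ) ^ (-k) * ξ (Fin.last (d + 1)))),
      ∀ α : Fin (d + 1) → ℝ, (∀ j, α j = 0 ∨ α j = 1) →
        (∑ j : Fin (d + 1), α j * ξ j.castSucc) + ξ (Fin.last (d + 1)) ≠ 0) ∧
    IsStandardSymbolR (d + 2) (fun ξ =>
      ∑' k : ℤ, muSymbol (d + 1) ξ *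
        (∏ j : Fin (d + 1), φ ((2:ℝ) ^ (-k) * ξ j.castSucc)) *
        ψ ((2:ℝ) ^ (-k) * ξ (Fin.last (d + 1)))) := by
  constructor
  · -- hyperplane part
    intro k ξ hξ α hα
    rw [Function.mem_support] at hξ
    have hψne : ψ ((2:ℝ) ^ (-k) * ξ (Fin.last (d + 1))) ≠ 0 := right_ne_zero_of_mul hξ
    have hφprod : (∏ j : Fin (d + 1), φ ((2:ℝ) ^ (-k) * ξ j.castSucc)) ≠ 0 :=
      right_ne_zero_of_mul (left_ne_zero_of_mul hξ)
    have hφne : ∀ j : Fin (d + 1), φ ((2:ℝ) ^ (-k) * ξ j.castSucc) ≠ 0 :=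
      fun j hj => hφprod (Finset.prod_eq_zero (Finset.mem_univ j) hj)
    obtain ⟨hb1, hb2, _⟩ := support_bounds hψsupp hφsupp hφne hψne
    refine (sum_sign hℓ₀ hb1 hb2 (fun j => ?_)).1
    rcases hα j with h | h <;> rw [h] <;> norm_num
  -- symbol part
  have hm_eq : (fun ξ : Fin (d + 2) → ℝ =>
      ∑' k : ℤ, muSymbol (d + 1) ξ *
        (∏ j : Fin (d + 1), φ ((2:ℝ) ^ (-k) * ξ j.castSucc)) *
        ψ ((2:ℝ) ^ (-k) * ξ (Fin.last (d + 1)))) =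
      (fun ξ => ∑' k : ℤ, Fk ψ φ d k ξ) := by
    funext ξ
    exact tsum_congr fun k => summand_eq_Fk hℓ₀ hψsupp hφsupp k ξ
  rw [hm_eq]
  set E := (Fin (d + 2) → ℝ)
  set mF : E → ℝ := fun ξ => ∑' k : ℤ, Fk ψ φ d k ξ with hmF
  set s : Set E := {(0 : E)}ᶜ with hs
  -- bounds on φ and ψ
  have hφcs : HasCompactSupport φ :=
    IsCompact.of_isClosed_subset isCompact_Icc (isClosed_tsupport φ) hφsupp
  have hψcs : HasCompactSupport ψ :=
    IsCompact.of_isClosed_subset (isCompact_Icc.union isCompact_Icc)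
      (isClosed_tsupport ψ) hψsupp
  obtain ⟨Cφ, hCφ⟩ := hφcs.exists_bound_of_continuous hφ.continuous
  obtain ⟨Cψ, hCψ⟩ := hψcs.exists_bound_of_continuous hψ.continuous
  have hCφ0 : 0 ≤ Cφ := le_trans (norm_nonneg _) (hCφ 0)
  have hCψ0 : 0 ≤ Cψ := le_trans (norm_nonneg _) (hCψ 0)
  set B : ℝ := Cφ ^ (d + 1) * Cψ with hB
  have hB0 : 0 ≤ B := mul_nonneg (pow_nonneg hCφ0 _) hCψ0
  have hFk_bound : ∀ (k : ℤ) (ξ : E), |Fk ψ φ d k ξ| ≤ B := by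
    intro k ξ
    rw [Fk, abs_mul]
    refine mul_le_mul ?_ ?_ (abs_nonneg _) (pow_nonneg hCφ0 _)
    · rw [Finset.abs_prod]
      calc ∏ j : Fin (d + 1), |φ ((2:ℝ) ^ (-k) * ξ j.castSucc)|
          ≤ ∏ _j : Fin (d + 1), Cφ := by
            refine Finset.prod_le_prod (fun j _ => abs_nonneg _) fun j _ => ?_
            have := hCφ ((2:ℝ) ^ (-k) * ξ j.castSucc)
            rwa [Real.norm_eq_abs] at this
        _ = Cφ ^ (d + 1) := by
            rw [Finset.prod_const, Finset.card_univ, Fintype.card_fin]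
    · refine le_trans (abs_psit_le ψ _) ?_
      have := hCψ ((2:ℝ) ^ (-k) * ξ (Fin.last (d + 1)))
      rwa [Real.norm_eq_abs] at this
  -- local representation as finite sum
  have hFk_zero_at_zero : ∀ k : ℤ, Fk ψ φ d k (0 : E) = 0 := by
    intro k
    have : ((2:ℝ) ^ (-k) * (0 : E) (Fin.last (d + 1))) = 0 := mul_zero _
    rw [Fk, this]
    simp [psit]
  have hrep : ∀ (S : Finset ℤ) (ξ : E), (∀ k : ℤ, Fk ψ φ d k ξ ≠ 0 → k ∈ S) →
      mF ξ = ∑ k ∈ S, Fk ψ φ d k ξ := by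
    intro S ξ hS
    exact tsum_eq_sum fun k hk => by_contra fun h => hk (hS k h)
  have hsmooth : ContDiffOn ℝ (⊤ : ℕ∞) mF s := by
    intro ξ₀ hξ₀
    have hξ0 : ξ₀ ≠ 0 := by simpa [hs] using hξ₀
    have hρ : 0 < ‖ξ₀‖ := norm_pos_iff.2 hξ0
    set S : Finset ℤ :=
      Finset.Icc (Int.log 2 (‖ξ₀‖ / 2) - 1) (Int.log 2 (2 * ‖ξ₀‖) + 1) with hS
    have hloc : ∀ ξ' ∈ Metric.ball ξ₀ (‖ξ₀‖ / 2), mF ξ' = ∑ k ∈ S, Fk ψ φ d k ξ' := by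
      intro ξ' hb
      refine hrep S ξ' fun k hk => ?_
      have hdist : ‖ξ' - ξ₀‖ < ‖ξ₀‖ / 2 := by
        rw [← dist_eq_norm]
        exact hb
      have habs := abs_norm_sub_norm_le ξ' ξ₀
      rw [abs_le] at habs
      have hlow : ‖ξ₀‖ / 2 ≤ ‖ξ'‖ := by linarith [habs.1]
      have hup : ‖ξ'‖ ≤ 2 * ‖ξ₀‖ := by linarith [habs.2]
      exact Fk_loc hψsupp hφsupp (div_pos hρ two_pos) hlow hup hk
    have hsum : ContDiff ℝ (⊤ : ℕ∞) (fun ξ' : E => ∑ k ∈ S, Fk ψ φ d k ξ') :=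
      ContDiff.sum fun k _ => contDiff_Fk hψ hψsupp hφ k
    have hat : ContDiffAt ℝ (⊤ : ℕ∞) mF ξ₀ := by
      refine hsum.contDiffAt.congr_of_eventuallyEq ?_
      filter_upwards [Metric.ball_mem_nhds ξ₀ (div_pos hρ two_pos)] with ξ' hξ'
      exact hloc ξ' hξ'
    exact hat.contDiffWithinAt
  refine ⟨?_, ?_, ?_⟩
  · -- boundedness
    refine ⟨3 * B, fun ξ => ?_⟩
    rcases eq_or_ne ξ 0 with rfl | hξ
    · have : mF (0 : E) = 0 := by
        rw [hrep ∅ 0 (fun k hk => absurd (hFk_zero_at_zero k) hk)]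
        simp
      rw [this]
      simp
      positivity
    · have hρ : 0 < ‖ξ‖ := norm_pos_iff.2 hξ
      set L := Int.log 2 ‖ξ‖ with hL
      rw [hrep (Finset.Icc (L - 1) (L + 1)) ξ
        (fun k hk => Fk_loc hψsupp hφsupp hρ le_rfl le_rfl hk)]
      calc |∑ k ∈ Finset.Icc (L - 1) (L + 1), Fk ψ φ d k ξ|
          ≤ ∑ k ∈ Finset.Icc (L - 1) (L + 1), |Fk ψ φ d k ξ| :=
            Finset.abs_sum_le_sum_abs _ _
        _ ≤ ∑ _k ∈ Finset.Icc (L - 1) (L + 1), B :=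
            Finset.sum_le_sum fun k _ => hFk_bound k ξ
        _ = 3 * B := by
            rw [Finset.sum_const, Int.card_Icc]
            have h3 : L + 1 + 1 - (L - 1) = 3 := by ring
            rw [h3]
            norm_num
            left
            simp
  · exact hsmooth
  · -- derivative estimates
    have hsu : UniqueDiffOn ℝ s := (isOpen_compl_singleton).uniqueDiffOn
    intro q
    have hcont : ContinuousOn (fun ξ : E => ‖iteratedFDerivWithin ℝ q mF s ξ‖) s :=
      (hsmooth.continuousOn_iteratedFDerivWithin (by exact_mod_cast le_top) hsu).norm
    set A : Set E := Metric.closedBall 0 2 \ Metric.ball 0 1 with hA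
    have hAc : IsCompact A := (isCompact_closedBall _ _).diff Metric.isOpen_ball
    have hAs : A ⊆ s := by
      intro x hx
      have hx1 : ¬ dist x 0 < 1 := fun h => hx.2 (Metric.mem_ball.2 h)
      have hxne : x ≠ 0 := by
        intro h
        subst h
        exact hx1 (by simpa using one_pos)
      simpa [hs] using hxne
    have hAne : A.Nonempty := by
      refine ⟨(fun _ => (1:ℝ) : E), ?_, ?_⟩
      · rw [Metric.mem_closedBall, dist_zero_right]
        rw [pi_norm_const]
        norm_num
      · intro hmem
        rw [Metric.mem_ball, dist_zero_right, pi_norm_const] at hmem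
        norm_num at hmem
    obtain ⟨z, hzA, hzmax⟩ := hAc.exists_isMaxOn hAne (hcont.mono hAs)
    set M := ‖iteratedFDerivWithin ℝ q mF s z‖ with hM
    have hM0 : 0 ≤ M := norm_nonneg _
    have key : ∀ (j : ℤ) (x : E), x ≠ 0 →
        ‖iteratedFDerivWithin ℝ q mF s x‖ ≤
          ‖iteratedFDerivWithin ℝ q mF s ((2:ℝ) ^ j • x)‖ * ((2:ℝ) ^ j) ^ q := by
      intro j x hx
      have hjne : ((2:ℝ) ^ j) ≠ 0 := (two_zpow_pos j).ne'
      set e : E →L[ℝ] E := (2:ℝ) ^ j • ContinuousLinearMap.id ℝ E with he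
      have heval : ∀ y : E, e y = (2:ℝ) ^ j • y := fun y => rfl
      have hpre : e ⁻¹' s = s := by
        ext y
        simp only [Set.mem_preimage, hs, Set.mem_compl_iff, Set.mem_singleton_iff, heval]
        rw [smul_eq_zero]
        constructor
        · intro h h'
          exact h (Or.inr h')
        · intro h h'
          rcases h' with h' | h'
          · exact hjne h'
          · exact h h'
      have hmex : e x ∈ s := by
        have : (2:ℝ) ^ j • x ≠ 0 := smul_ne_zero hjne hx
        rw [heval]
        simpa [hs] using this
      have hcomp : mF ∘ e = mF := by
        funext y
        rw [Function.comp_apply, heval]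
        exact mF_smul j y
      have heq := e.iteratedFDerivWithin_comp_right (f := mF) (i := q) hsmooth hsu
        (by rw [hpre]; exact hsu) hmex (by exact_mod_cast le_top)
      rw [hcomp, hpre, heval] at heq
      rw [heq]
      refine le_trans (ContinuousMultilinearMap.norm_compContinuousLinearMap_le _ _) ?_
      have hnorme : ‖e‖ ≤ (2:ℝ) ^ j := by
        refine ContinuousLinearMap.opNorm_le_bound e (two_zpow_pos j).le fun y => ?_
        rw [heval, norm_smul, Real.norm_eq_abs, abs_of_pos (two_zpow_pos j)]
      have hprod : (∏ _i : Fin q, ‖e‖) = ‖e‖ ^ q := by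
        rw [Finset.prod_const, Finset.card_univ, Fintype.card_fin]
      rw [hprod]
      exact mul_le_mul_of_nonneg_left (pow_le_pow_left₀ (norm_nonneg e) hnorme q)
        (norm_nonneg _)
    refine ⟨(M + 1) * 2 ^ q, by positivity, ?_⟩
    intro ξ hξ
    have hρ : 0 < ‖ξ‖ := norm_pos_iff.2 hξ
    set L := Int.log 2 ‖ξ‖ with hL
    have h1 : (2:ℝ) ^ L ≤ ‖ξ‖ := by
      simpa using Int.zpow_log_le_self (by norm_num : 1 < 2) hρ
    have h2 : ‖ξ‖ < (2:ℝ) ^ (L + 1) := by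
      simpa using Int.lt_zpow_succ_log_self (by norm_num : 1 < 2) ‖ξ‖
    have hnorm_smul : ‖(2:ℝ) ^ (-L) • ξ‖ = (2:ℝ) ^ (-L) * ‖ξ‖ := by
      rw [norm_smul, Real.norm_eq_abs, abs_of_pos (two_zpow_pos _)]
    have hprod2 : (2:ℝ) ^ (-L) * ‖ξ‖ ≤ 2 := by
      calc (2:ℝ) ^ (-L) * ‖ξ‖ ≤ 2 ^ (-L) * 2 ^ (L + 1) :=
            mul_le_mul_of_nonneg_left h2.le (two_zpow_pos _).le
        _ = 2 := by
            rw [← zpow_add₀ (by norm_num : (2:ℝ) ≠ 0)]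
            norm_num
    have hprod1 : (1:ℝ) ≤ (2:ℝ) ^ (-L) * ‖ξ‖ := by
      calc (1:ℝ) = 2 ^ (-L) * 2 ^ L := by
            rw [← zpow_add₀ (by norm_num : (2:ℝ) ≠ 0)]
            norm_num
        _ ≤ 2 ^ (-L) * ‖ξ‖ := mul_le_mul_of_nonneg_left h1 (two_zpow_pos _).le
    have hmemA : ((2:ℝ) ^ (-L) • ξ) ∈ A := by
      constructor
      · rw [Metric.mem_closedBall, dist_zero_right, hnorm_smul]
        exact hprod2
      · intro hmem
        rw [Metric.mem_ball, dist_zero_right, hnorm_smul] at hmem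
        linarith
    have hkey := key (-L) ξ hξ
    have hMb : ‖iteratedFDerivWithin ℝ q mF s ((2:ℝ) ^ (-L) • ξ)‖ ≤ M := hzmax hmemA
    have h2L : (2:ℝ) ^ (-L) ≤ 2 / ‖ξ‖ := (le_div_iff₀ hρ).2 hprod2
    calc ‖iteratedFDerivWithin ℝ q mF s ξ‖
        ≤ M * ((2:ℝ) ^ (-L)) ^ q :=
          le_trans hkey (mul_le_mul_of_nonneg_right hMb
            (pow_nonneg (two_zpow_pos _).le q))
      _ ≤ M * (2 / ‖ξ‖) ^ q :=
          mul_le_mul_of_nonneg_left (pow_le_pow_left₀ (two_zpow_pos _).le h2L q) hM0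
      _ ≤ (M + 1) * 2 ^ q * ‖ξ‖ ^ (-(q : ℝ)) := by
          rw [Real.rpow_neg hρ.le, Real.rpow_natCast, div_pow, div_eq_mul_inv]
          have hinv : (0:ℝ) ≤ (‖ξ‖ ^ q)⁻¹ := by positivity
          have h2q : (0:ℝ) ≤ 2 ^ q := by positivity
          nlinarith [mul_nonneg h2q hinv]

end Main

/-- **Lemma (the smooth `ψ`-`φ` case).** Let `n = d + 2 ≥ 2`, let `ψ` be a smooth function
supported in `[-2,-1/2] ∪ [1/2,2]` and let `φ` be a smooth function supported in
`[-2^{-ℓ₀+1}, 2^{-ℓ₀+1}]`, where `ℓ₀` is so large that `(n-1)·2^{-ℓ₀+1} < 1/2`. Then the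
support of each summand `μ_n(ξ) φ(2^{-k}ξ₁) ⋯ φ(2^{-k}ξ_{n-1}) ψ(2^{-k}ξ_n)` is disjoint
from every hyperplane `{ξ : α₁ξ₁ + ⋯ + α_{n-1}ξ_{n-1} + ξ_n = 0}` with `α ∈ {0,1}^{n-1}`,
and `m(ξ) = ∑_{k ∈ ℤ} μ_n(ξ) φ(2^{-k}ξ₁) ⋯ φ(2^{-k}ξ_{n-1}) ψ(2^{-k}ξ_n)` is a standard
smooth symbol on `ℝⁿ`. -/
theorem smooth_psi_phi_case
    (d : ℕ) (ψ φ : ℝ → ℝ) (ℓ₀ : ℕ)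
    (hℓ₀ : ((d : ℝ) + 1) * (2:ℝ) ^ (-(ℓ₀ : ℤ) + 1) < 1/2)
    (hψ : ContDiff ℝ (⊤ : ℕ∞) ψ)
    (hψsupp : tsupport ψ ⊆ Set.Icc (-2 : ℝ) (-(1/2)) ∪ Set.Icc (1/2 : ℝ) 2)
    (hφ : ContDiff ℝ (⊤ : ℕ∞) φ)
    (hφsupp : tsupport φ ⊆
      Set.Icc (-(2:ℝ) ^ (-(ℓ₀ : ℤ) + 1)) ((2:ℝ) ^ (-(ℓ₀ : ℤ) + 1))) :
    (∀ k : ℤ, ∀ ξ ∈ Function.support (fun ξ : Fin (d + 2) → ℝ =>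
        muSymbol (d + 1) ξ * (∏ j : Fin (d + 1), φ ((2:ℝ) ^ (-k) * ξ j.castSucc)) *
          ψ ((2:ℝ) ^ (-k) * ξ (Fin.last (d + 1)))),
      ∀ α : Fin (d + 1) → ℝ, (∀ j, α j = 0 ∨ α j = 1) →
        (∑ j : Fin (d + 1), α j * ξ j.castSucc) + ξ (Fin.last (d + 1)) ≠ 0) ∧
    IsStandardSymbolR (d + 2) (fun ξ =>
      ∑' k : ℤ, muSymbol (d + 1) ξ *
        (∏ j : Fin (d + 1), φ ((2:ℝ) ^ (-k) * ξ j.castSucc)) *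
        ψ ((2:ℝ) ^ (-k) * ξ (Fin.last (d + 1)))) := by
  exact smooth_psi_phi_case_aux hℓ₀ hψ hψsupp hφ hφsupp
end
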